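/- arXiv:1209.4691 — 6 statements merged into one kernel-verified Lean document; each statement's English description precedes it below -/
import Mathlib

section
/- Let S be a finite set of integers and let φ be a non-erasing morphism assigning to each s ∈ S a nonempty finite integer word φ(s), extended to finite and infinite words over S by concatenation. Then φ is an anchor (i.e., for every infinite word ω over S, the infinite word φ(ω) obtained by concatenating φ(ω(0))φ(ω(1))φ(ω(2))⋯ has bounded additive complexity) if and only if slope(φ(s)) = slope(φ(s′)) for all s, s′ ∈ S. -/
/-- `B` is a factor of the infinite word `ω`. -/
def Factor (ω : ℕ → ℤ) (B : List ℤ) : Prop :=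
  ∃ m : ℕ, B = (List.range B.length).map (fun i => ω (m + i))

/-- `ω` has bounded additive complexity: there is `M` such that for every `n ≥ 1`
the set of sums of factors of length `n` has at most `M` elements. -/
def BoundedAddComplexity (ω : ℕ → ℤ) : Prop :=
  ∃ M : ℕ, ∀ n : ℕ, 1 ≤ n →
    ∃ T : Finset ℤ, T.card ≤ M ∧
      ∀ B : List ℤ, Factor ω B → B.length = n → B.sum ∈ T

/-- The slope of a finite word. -/
def wordSlope (B : List ℤ) : ℚ := (B.sum : ℚ) / (B.length : ℚ)

/-- `ω` has slope `L`. -/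
def HasSlope (ω : ℕ → ℤ) (L : ℝ) : Prop :=
  Filter.Tendsto (fun n : ℕ => (∑ i ∈ Finset.range n, (ω i : ℝ)) / n)
    Filter.atTop (nhds L)

/-- The image of the length-`n` prefix of ω under the morphism φ. -/
def phiPrefix (φ : ℤ → List ℤ) (ω : ℕ → ℤ) (n : ℕ) : List ℤ :=
  ((List.range n).map (fun i => φ (ω i))).flatten

/-- ω' is the image of the infinite word ω under the morphism φ, i.e. the infinite
concatenation φ(ω 0)φ(ω 1)φ(ω 2)⋯. -/
def IsImage (φ : ℤ → List ℤ) (ω ω' : ℕ → ℤ) : Prop :=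
  ∀ n : ℕ, phiPrefix φ ω n = (List.range (phiPrefix φ ω n).length).map ω'

/-! ### Auxiliary lemmas -/

lemma phiPrefix_succ (φ : ℤ → List ℤ) (ω : ℕ → ℤ) (n : ℕ) :
    phiPrefix φ ω (n+1) = phiPrefix φ ω n ++ φ (ω n) := by
  simp [phiPrefix, List.range_succ]

lemma phiPrefix_add (φ : ℤ → List ℤ) (ω : ℕ → ℤ) (p q : ℕ) :
    phiPrefix φ ω (p+q) = phiPrefix φ ω p ++
      ((List.range q).map (fun i => φ (ω (p+i)))).flatten := by
  simp only [phiPrefix, List.range_add, List.map_append, List.map_map, List.flatten_append]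
  rfl

lemma phiPrefix_prefix (φ : ℤ → List ℤ) (ω : ℕ → ℤ) {m n : ℕ} (h : m ≤ n) :
    phiPrefix φ ω m <+: phiPrefix φ ω n := by
  obtain ⟨q, rfl⟩ := Nat.exists_eq_add_of_le h
  rw [phiPrefix_add]; exact List.prefix_append _ _

lemma length_phiPrefix_ge (φ : ℤ → List ℤ) (ω : ℕ → ℤ) (h : ∀ i, φ (ω i) ≠ []) (n : ℕ) :
    n ≤ (phiPrefix φ ω n).length := by
  induction n with
  | zero => simp
  | succ n ih =>
    rw [phiPrefix_succ, List.length_append]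
    have : 1 ≤ (φ (ω n)).length := List.length_pos_iff.mpr (h n)
    omega

noncomputable def limitWord (Q : ℕ → List ℤ) (d : ℤ) (n : ℕ) : ℤ := (Q (n+1)).getD n d

lemma limitWord_spec (Q : ℕ → List ℤ) (d : ℤ)
    (hmono : ∀ {m n : ℕ}, m ≤ n → Q m <+: Q n)
    (hlen : ∀ n, n ≤ (Q n).length) (n : ℕ) :
    Q n = (List.range (Q n).length).map (limitWord Q d) := by
  apply List.ext_getElem (by simp)
  intro i h1 h2
  simp only [List.getElem_map, List.getElem_range]
  have hi1 : i < (Q (i+1)).length := hlen (i+1)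
  have : limitWord Q d i = (Q (i+1))[i] := List.getD_eq_getElem _ _ hi1
  rw [this]
  rcases le_total (i+1) n with h | h
  · exact ((hmono h).getElem hi1).symm
  · exact (hmono h).getElem h1

lemma factor_of_getElem (ω : ℕ → ℤ) (B : List ℤ) (m : ℕ)
    (h : ∀ i (hi : i < B.length), B[i] = ω (m+i)) : Factor ω B := by
  refine ⟨m, ?_⟩
  apply List.ext_getElem (by simp)
  intro i h1 h2
  simp only [List.getElem_map, List.getElem_range]
  exact h i h1

lemma factor_of_infix (ν : ℕ → ℤ) (Q : List ℤ) (hQ : Q = (List.range Q.length).map ν)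
    (B : List ℤ) (h : B <:+: Q) : Factor ν B := by
  obtain ⟨L₁, L₂, hd⟩ := h
  apply factor_of_getElem ν B L₁.length
  intro i hi
  have hlen : L₁.length + i < Q.length := by rw [← hd]; simp; omega
  have h1 : Q[L₁.length + i]'hlen = B[i] := by
    subst hd
    rw [List.getElem_append_left (by simp; omega), List.getElem_append_right (by omega)]
    congr 1; omega
  rw [← h1, List.getElem_of_eq hQ hlen]
  simp

lemma sum_map_range (f : ℕ → ℤ) (n : ℕ) :
    ((List.range n).map f).sum = ∑ i ∈ Finset.range n, f i := by
  induction n with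
  | zero => simp
  | succ n ih => rw [List.range_succ]; simp [ih, Finset.sum_range_succ]

lemma abs_list_sum_le (l : List ℤ) : |l.sum| ≤ (l.map (|·|)).sum := by
  induction l with
  | nil => simp
  | cons a l ih =>
    simp only [List.sum_cons, List.map_cons]
    exact (abs_add_le _ _).trans (by linarith)

lemma abs_sum_take_le (l : List ℤ) (k : ℕ) : ((l.take k).map (|·|)).sum ≤ (l.map (|·|)).sum := by
  conv_rhs => rw [← List.take_append_drop k l]
  simp only [List.map_append, List.sum_append]
  have : 0 ≤ ((l.drop k).map (|·|)).sum := List.sum_nonneg (by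
    intro x hx; simp only [List.mem_map] at hx; obtain ⟨a, _, rfl⟩ := hx; exact abs_nonneg a)
  linarith

/-- image of a factor is a factor of the image. -/
lemma factor_image (φ : ℤ → List ℤ) (ω ω' : ℕ → ℤ) (him : IsImage φ ω ω')
    (w : List ℤ) (hw : Factor ω w) : Factor ω' ((w.map φ).flatten) := by
  obtain ⟨p, hp⟩ := hw
  apply factor_of_infix ω' (phiPrefix φ ω (p + w.length)) (him _)
  rw [phiPrefix_add]
  have : (List.range w.length).map (fun i => φ (ω (p+i))) = w.map φ := by
    conv_rhs => rw [hp]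
    rw [List.map_map]
    simp [Function.comp_def]
  rw [this]
  exact (List.suffix_append _ _).isInfix

lemma sum_phiPrefix (φ : ℤ → List ℤ) (ω : ℕ → ℤ) (α : ℚ)
    (hsum : ∀ i, ((φ (ω i)).sum : ℚ) = α * (φ (ω i)).length) (n : ℕ) :
    ((phiPrefix φ ω n).sum : ℚ) = α * (phiPrefix φ ω n).length := by
  induction n with
  | zero => simp [phiPrefix]
  | succ n ih =>
    rw [phiPrefix_succ, List.sum_append, List.length_append, Int.cast_add, Nat.cast_add,
      ih, hsum n]
    ring

lemma partial_bound (φ : ℤ → List ℤ) (ω : ℕ → ℤ) (α A : ℚ) (L : ℕ)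
    (h0A : 0 ≤ A)
    (hA : ∀ i, ((((φ (ω i)).map (|·|)).sum : ℤ) : ℚ) ≤ A)
    (hL : ∀ i, (φ (ω i)).length ≤ L)
    (hαA : |α| ≤ A)
    (hsum : ∀ i, ((φ (ω i)).sum : ℚ) = α * (φ (ω i)).length)
    (n : ℕ) : ∀ k, k ≤ (phiPrefix φ ω n).length →
      |(((phiPrefix φ ω n).take k).sum : ℚ) - α * k| ≤ A + A * L := by
  induction n with
  | zero =>
    intro k hk
    simp only [phiPrefix, List.range_zero, List.map_nil, List.flatten_nil, List.length_nil,
      Nat.le_zero] at hk ⊢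
    subst hk
    simp only [List.take_nil, List.sum_nil, Int.cast_zero, Nat.cast_zero, mul_zero, sub_zero,
      abs_zero]
    positivity
  | succ n ih =>
    intro k hk
    rw [phiPrefix_succ] at hk ⊢
    rcases le_or_gt k (phiPrefix φ ω n).length with h | h
    · rw [List.take_append_of_le_length h]; exact ih k h
    · set ℓ := (phiPrefix φ ω n).length with hℓ
      set r := k - ℓ with hr
      have hrb : r ≤ (φ (ω n)).length := by
        simp only [List.length_append] at hk; omega
      have hk' : k = ℓ + r := by omega
      rw [hk', List.take_length_add_append, List.sum_append, Int.cast_add, Nat.cast_add,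
        sum_phiPrefix φ ω α hsum n]
      have hps : |(((φ (ω n)).take r).sum : ℚ)| ≤ A := by
        rw [← Int.cast_abs]
        refine le_trans ?_ (hA n)
        exact_mod_cast (abs_list_sum_le _).trans (abs_sum_take_le _ _)
      have hr2 : (r : ℚ) ≤ (L : ℚ) := by exact_mod_cast hrb.trans (hL n)
      have h2 : |α * (r : ℚ)| ≤ A * L := by
        rw [abs_mul, abs_of_nonneg (by positivity : (0:ℚ) ≤ (r:ℚ))]
        exact mul_le_mul hαA hr2 (by positivity) h0A
      have habs : |(((φ (ω n)).take r).sum : ℚ) - α * r| ≤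
          |(((φ (ω n)).take r).sum : ℚ)| + |α * (r:ℚ)| := by
        rw [sub_eq_add_neg]
        exact (abs_add_le _ _).trans (by rw [abs_neg])
      have : α * (↑ℓ : ℚ) + ↑((φ (ω n)).take r).sum - α * (↑ℓ + ↑r) =
          ((((φ (ω n)).take r).sum : ℚ)) - α * r := by ring
      rw [this]
      linarith

/-- A non-erasing morphism is an anchor (the image of every infinite word over S has
bounded additive complexity) iff all letter images have equal slope. -/
theorem stmt11 (S : Finset ℤ) (φ : ℤ → List ℤ) (hφ : ∀ s ∈ S, φ s ≠ []) :
    (∀ ω : ℕ → ℤ, (∀ i : ℕ, ω i ∈ S) →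
      ∀ ω' : ℕ → ℤ, IsImage φ ω ω' → BoundedAddComplexity ω')
    ↔ ∀ s ∈ S, ∀ s' ∈ S, wordSlope (φ s) = wordSlope (φ s') := by
  constructor
  · -- anchor ⇒ equal slopes (by contradiction)
    intro H s hs s' hs'
    by_contra hne
    set a := (φ s).length with hadef
    set b := (φ s').length with hbdef
    have ha : 0 < a := List.length_pos_iff.mpr (hφ s hs)
    have hb : 0 < b := List.length_pos_iff.mpr (hφ s' hs')
    set φb : ℤ → List ℤ :=
      fun z => List.replicate ((z.toNat+1)*a) s' ++ List.replicate ((z.toNat+1)*b) s with hφb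
    set ωb : ℕ → ℤ := fun n => (n : ℤ) with hωb
    set Q : ℕ → List ℤ := phiPrefix φb ωb with hQdef
    have hQne : ∀ i, φb (ωb i) ≠ [] := by
      intro i
      apply List.ne_nil_of_length_pos
      simp only [hφb, hωb, Int.toNat_natCast, List.length_append, List.length_replicate]
      have h1 : 0 < (i+1)*a := by positivity
      omega
    have hQlenT : ∀ n, n ≤ (Q n).length := length_phiPrefix_ge φb ωb hQne
    have hQmono : ∀ {m n : ℕ}, m ≤ n → Q m <+: Q n := fun h => phiPrefix_prefix φb ωb h
    set ω : ℕ → ℤ := limitWord Q s with hωdef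
    have hQspec := limitWord_spec Q s hQmono hQlenT
    have hmemQ : ∀ n x, x ∈ Q n → x ∈ S := by
      intro n x hx
      rw [hQdef, phiPrefix] at hx
      rcases List.mem_flatten.mp hx with ⟨l, hl, hxl⟩
      rcases List.mem_map.mp hl with ⟨i, _, rfl⟩
      rcases List.mem_append.mp hxl with h | h
      · rw [List.eq_of_mem_replicate h]; exact hs'
      · rw [List.eq_of_mem_replicate h]; exact hs
    have hωS : ∀ i, ω i ∈ S := by
      intro i
      have hi1 : i < (Q (i+1)).length := hQlenT (i+1)
      have hgd : ω i = (Q (i+1))[i] := List.getD_eq_getElem _ _ hi1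
      rw [hgd]
      exact hmemQ _ _ (List.getElem_mem _)
    have hφω : ∀ i, φ (ω i) ≠ [] := fun i => hφ _ (hωS i)
    set ω' : ℕ → ℤ := limitWord (phiPrefix φ ω) 0 with hω'def
    have him : IsImage φ ω ω' :=
      limitWord_spec _ 0 (fun h => phiPrefix_prefix φ ω h) (length_phiPrefix_ge φ ω hφω)
    obtain ⟨M, hM⟩ := H ω hωS ω' him
    set K := M + 1 with hKdef
    obtain ⟨T, hTcard, hT⟩ := hM (K*a*b) (Nat.one_le_iff_ne_zero.mpr (Nat.mul_ne_zero (Nat.mul_ne_zero (by omega) ha.ne') hb.ne'))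
    set w : ℕ → List ℤ :=
      fun t => List.replicate (t*a) s' ++ List.replicate ((K-t)*b) s with hwdef
    set Bt : ℕ → List ℤ := fun t => ((w t).map φ).flatten with hBtdef
    have hfacw : ∀ t, t ≤ K → Factor ω (w t) := by
      intro t ht
      apply factor_of_infix ω (Q K) (hQspec K)
      have hQK : Q K = Q M ++ (List.replicate (K*a) s' ++ List.replicate (K*b) s) := by
        rw [hQdef, hKdef, phiPrefix_succ]
        simp only [hφb, hωb, Int.toNat_natCast]
      have e1 : List.replicate (K*a) s' =
          List.replicate ((K-t)*a) s' ++ List.replicate (t*a) s' := by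
        rw [← List.replicate_add]
        congr 1
        rw [← Nat.add_mul, Nat.sub_add_cancel ht]
      have e2 : List.replicate (K*b) s =
          List.replicate ((K-t)*b) s ++ List.replicate (t*b) s := by
        rw [← List.replicate_add]
        congr 1
        rw [← Nat.add_mul, Nat.sub_add_cancel ht]
      have hmid : w t <:+: (List.replicate (K*a) s' ++ List.replicate (K*b) s) := by
        refine ⟨List.replicate ((K-t)*a) s', List.replicate (t*b) s, ?_⟩
        rw [e1, e2, hwdef]
        simp only [List.append_assoc]
      rw [hQK]
      exact hmid.trans (List.suffix_append _ _).isInfix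
    have hfacB : ∀ t, t ≤ K → Factor ω' (Bt t) :=
      fun t ht => factor_image φ ω ω' him _ (hfacw t ht)
    have hlenB : ∀ t, t ≤ K → (Bt t).length = K*a*b := by
      intro t ht
      simp only [hBtdef, hwdef, List.map_append, List.map_replicate, List.flatten_append,
        List.length_append, List.length_flatten, List.map_replicate, List.sum_replicate,
        smul_eq_mul]
      rw [← hadef, ← hbdef]
      obtain ⟨u, hKu⟩ : ∃ u, K = t + u := ⟨K - t, by omega⟩
      have h2 : K - t = u := by omega
      rw [h2, hKu]
      ring
    have hsumB : ∀ t, t ≤ K →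
        (Bt t).sum = (t*a : ℕ) * (φ s').sum + (((K-t)*b : ℕ)) * (φ s).sum := by
      intro t ht
      simp only [hBtdef, hwdef, List.map_append, List.map_replicate, List.flatten_append,
        List.sum_append, List.sum_flatten, List.map_replicate, List.sum_replicate, smul_eq_mul]
      push_cast
      ring
    have key : ((φ s).sum : ℤ) * (b:ℤ) ≠ ((φ s').sum : ℤ) * (a:ℤ) := by
      intro hcontra
      apply hne
      rw [wordSlope, wordSlope, div_eq_div_iff
        (by rw [← hadef]; exact_mod_cast ha.ne')
        (by rw [← hbdef]; exact_mod_cast hb.ne')]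
      exact_mod_cast hcontra
    have hinj : Set.InjOn (fun t => (Bt t).sum) (Finset.range (K+1)) := by
      intro t₁ h₁ t₂ h₂ heq
      simp only [Finset.coe_range, Set.mem_Iio] at h₁ h₂
      have ht₁ : t₁ ≤ K := by omega
      have ht₂ : t₂ ≤ K := by omega
      simp only [hsumB t₁ ht₁, hsumB t₂ ht₂] at heq
      have e1 : ((K - t₁ : ℕ) : ℤ) = (K:ℤ) - (t₁:ℤ) := by omega
      have e2 : ((K - t₂ : ℕ) : ℤ) = (K:ℤ) - (t₂:ℤ) := by omega
      push_cast [e1, e2] at heq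
      have hz : ((t₁:ℤ) - t₂) * ((a:ℤ) * (φ s').sum - (b:ℤ) * (φ s).sum) = 0 := by
        linear_combination heq
      rcases mul_eq_zero.mp hz with h | h
      · have : (t₁:ℤ) = t₂ := by linarith
        exact_mod_cast this
      · exfalso
        apply key
        linarith
    have hmaps : ∀ t ∈ Finset.range (K+1), (fun t => (Bt t).sum) t ∈ T := by
      intro t ht
      simp only [Finset.mem_range] at ht
      exact hT (Bt t) (hfacB t (by omega)) (hlenB t (by omega))
    have hle := Finset.card_le_card_of_injOn (fun t => (Bt t).sum) hmaps hinj
    rw [Finset.card_range] at hle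
    omega
  · -- equal slopes ⇒ bounded complexity
    intro hslopes ω hω ω' him
    rcases Finset.eq_empty_or_nonempty S with rfl | ⟨s₀, hs₀⟩
    · exact absurd (hω 0) (by simp)
    set α := wordSlope (φ s₀) with hα
    set A : ℚ := ∑ s ∈ S, ((((φ s).map (|·|)).sum : ℤ) : ℚ) with hAdef
    have habspos : ∀ s : ℤ, (0:ℚ) ≤ ((((φ s).map (|·|)).sum : ℤ) : ℚ) := by
      intro s
      have : (0:ℤ) ≤ ((φ s).map (|·|)).sum := List.sum_nonneg (by
        intro x hx; simp only [List.mem_map] at hx; obtain ⟨a, _, rfl⟩ := hx; exact abs_nonneg a)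
      exact_mod_cast this
    have h0A : (0:ℚ) ≤ A := Finset.sum_nonneg (fun s _ => habspos s)
    have hAmem : ∀ s ∈ S, ((((φ s).map (|·|)).sum : ℤ) : ℚ) ≤ A :=
      fun s hs => Finset.single_le_sum (fun t _ => habspos t) hs
    have hA : ∀ i, ((((φ (ω i)).map (|·|)).sum : ℤ) : ℚ) ≤ A := fun i => hAmem _ (hω i)
    set L : ℕ := ∑ s ∈ S, (φ s).length with hLdef
    have hL : ∀ i, (φ (ω i)).length ≤ L :=
      fun i => Finset.single_le_sum (f := fun s => (φ s).length) (fun t _ => Nat.zero_le _) (hω i)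
    have hlen0 : ∀ s ∈ S, (1:ℚ) ≤ ((φ s).length : ℚ) := by
      intro s hs
      have : 1 ≤ (φ s).length := List.length_pos_iff.mpr (hφ s hs)
      exact_mod_cast this
    have hαA : |α| ≤ A := by
      rw [hα, wordSlope, abs_div]
      refine le_trans (div_le_self ?_ ?_) ?_
      · positivity
      · rw [abs_of_nonneg (by positivity)]; exact hlen0 s₀ hs₀
      · rw [← Int.cast_abs]
        refine le_trans ?_ (hAmem s₀ hs₀)
        exact_mod_cast abs_list_sum_le _
    have hsum : ∀ i, ((φ (ω i)).sum : ℚ) = α * (φ (ω i)).length := by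
      intro i
      have h1 : wordSlope (φ (ω i)) = α := hslopes _ (hω i) _ hs₀
      rw [wordSlope] at h1
      have h2 : ((φ (ω i)).length : ℚ) ≠ 0 := by
        have := hlen0 _ (hω i); linarith
      rw [div_eq_iff h2] at h1
      exact h1
    set C : ℚ := A + A * L with hC
    set c : ℤ := ⌈2 * C⌉ with hc
    refine ⟨(2*c + 2).toNat, ?_⟩
    intro n hn
    refine ⟨Finset.Icc (⌊α * n⌋ - c) (⌊α * n⌋ + c + 1), ?_, ?_⟩
    · rw [Int.card_Icc]; omega
    intro B hB hlenB
    obtain ⟨m, hm⟩ := hB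
    set P := phiPrefix φ ω (m + n) with hPdef
    have hP : P = (List.range P.length).map ω' := him (m+n)
    have hPlen : m + n ≤ P.length := length_phiPrefix_ge _ _ (fun i => hφ _ (hω i)) (m+n)
    have htake : ∀ k, k ≤ P.length → P.take k = (List.range k).map ω' := by
      intro k hk
      conv_lhs => rw [hP]
      rw [← List.map_take, List.take_range, Nat.min_eq_left hk]
    have hsplit : P.take (m+n) = P.take m ++ B := by
      rw [htake (m+n) hPlen, htake m (by omega)]
      rw [List.range_add, List.map_append, List.map_map]
      congr 1
      rw [hm, hlenB]
      simp [Function.comp_def]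
    have hsum_take : (P.take (m+n)).sum = (P.take m).sum + B.sum := by
      rw [hsplit, List.sum_append]
    have hb1 := partial_bound φ ω α A L h0A hA hL hαA hsum (m+n) (m+n) hPlen
    have hb2 := partial_bound φ ω α A L h0A hA hL hαA hsum (m+n) m (by rw [← hPdef]; omega)
    rw [← hPdef] at hb1 hb2
    have key : |(B.sum : ℚ) - α * n| ≤ 2 * C := by
      have e : (B.sum : ℚ) - α * n =
          (((P.take (m+n)).sum : ℚ) - α * ((m+n : ℕ) : ℚ)) - (((P.take m).sum : ℚ) - α * m) := by
        rw [hsum_take, Int.cast_add]; push_cast; ring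
      rw [e]
      refine (abs_sub _ _).trans ?_
      rw [hC]
      linarith
    rw [Finset.mem_Icc]
    have hkey := abs_le.mp key
    have hfl := Int.floor_le (α * n)
    have hfl2 := Int.lt_floor_add_one (α * n)
    have hcl := Int.le_ceil (2 * C)
    constructor
    · have h9 : ((⌊α * ↑n⌋ : ℤ) : ℚ) - (c : ℚ) ≤ (B.sum : ℚ) := by
        rw [hc]; linarith [hkey.1, hfl, hcl]
      exact_mod_cast h9
    · have h9 : (B.sum : ℚ) < ((⌊α * ↑n⌋ : ℤ) : ℚ) + (c : ℚ) + 1 := by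
        rw [hc]; linarith [hkey.2, hfl2, hcl]
      have h10 : B.sum < ⌊α * ↑n⌋ + c + 1 := by exact_mod_cast h9
      omega
end

section
/- Let S be a finite set of integers and let φ be a non-erasing morphism assigning to each s ∈ S a nonempty finite integer word φ(s) over a finite integer alphabet T, extended to finite words over S by concatenation. Suppose that for all finite words B₁, B₂ over S, |φ(B₁)| = |φ(B₂)| implies Σφ(B₁) = Σφ(B₂). Then for every fixed N ∈ ℕ the quantity |Σφ(B₁) − Σφ(B₂)| is bounded over all pairs of finite words B₁, B₂ over S with ||φ(B₁)| − |φ(B₂)|| ≤ 2N − 2; in fact it is at most (2N − 2)·max_{t ∈ T} |t|. -/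
/-- Under condition (ii) of Lemma 5, the sums of φ-images of words whose image lengths
differ by at most 2N - 2 differ by at most (2N - 2)·max_{t ∈ T} |t|. -/
theorem stmt13 (S T : Finset ℤ) (φ : ℤ → List ℤ)
    (hφ : ∀ s ∈ S, φ s ≠ [] ∧ ∀ x ∈ φ s, x ∈ T)
    (hcond : ∀ B₁ B₂ : List ℤ, (∀ x ∈ B₁, x ∈ S) → (∀ x ∈ B₂, x ∈ S) →
      (B₁.map φ).flatten.length = (B₂.map φ).flatten.length →
      (B₁.map φ).flatten.sum = (B₂.map φ).flatten.sum) :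
    ∀ N : ℕ, ∀ B₁ B₂ : List ℤ, (∀ x ∈ B₁, x ∈ S) → (∀ x ∈ B₂, x ∈ S) →
      |((B₁.map φ).flatten.length : ℤ) - ((B₂.map φ).flatten.length : ℤ)|
        ≤ 2 * (N : ℤ) - 2 →
      |(B₁.map φ).flatten.sum - (B₂.map φ).flatten.sum|
        ≤ (2 * (N : ℤ) - 2) * ((T.sup (fun t => t.natAbs) : ℕ) : ℤ) := by
  intro N B₁ B₂ h₁ h₂ hlen
  set m : ℤ := ((T.sup (fun t => t.natAbs) : ℕ) : ℤ) with hm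
  have hm0 : (0:ℤ) ≤ m := Int.natCast_nonneg _
  have hT : ∀ (B : List ℤ), (∀ x ∈ B, x ∈ S) → ∀ x ∈ (B.map φ).flatten, x ∈ T := by
    intro B hB x hx
    rw [List.mem_flatten] at hx
    obtain ⟨l, hl, hxl⟩ := hx
    rw [List.mem_map] at hl
    obtain ⟨s, hs, rfl⟩ := hl
    exact (hφ s (hB s hs)).2 x hxl
  have hsum_bound : ∀ (l : List ℤ), (∀ x ∈ l, x ∈ T) → |l.sum| ≤ (l.length : ℤ) * m := by
    intro l
    induction l with
    | nil => simp
    | cons a t ih =>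
      intro h
      have ha : |a| ≤ m := by
        have h1 : a.natAbs ≤ T.sup (fun t => t.natAbs) :=
          Finset.le_sup (f := fun t => t.natAbs) (h a (by simp))
        rw [Int.abs_eq_natAbs, hm]
        exact_mod_cast h1
      have ht := ih (fun x hx => h x (List.mem_cons_of_mem _ hx))
      have habs : |(a :: t).sum| ≤ |a| + |t.sum| := by
        simp only [List.sum_cons]
        exact abs_add_le _ _
      simp only [List.length_cons]
      push_cast
      linarith
  have hrep : ∀ (k : ℕ) (B : List ℤ),
      (((List.replicate k B).flatten).map φ).flatten.length
        = k * (B.map φ).flatten.length ∧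
      (((List.replicate k B).flatten).map φ).flatten.sum
        = (k : ℤ) * (B.map φ).flatten.sum := by
    intro k B
    induction k with
    | zero => simp
    | succ n ih =>
      rw [List.replicate_succ]
      simp only [List.flatten_cons, List.map_append, List.flatten_append,
        List.length_append, List.sum_append, ih.1, ih.2]
      constructor
      · ring
      · push_cast; ring
  have hrepmem : ∀ (k : ℕ) (B : List ℤ), (∀ x ∈ B, x ∈ S) →
      ∀ x ∈ (List.replicate k B).flatten, x ∈ S := by
    intro k B hB x hx
    rw [List.mem_flatten] at hx
    obtain ⟨l, hl, hxl⟩ := hx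
    rw [List.mem_replicate] at hl
    exact hB x (hl.2 ▸ hxl)
  set L₁ := (B₁.map φ).flatten.length with hL₁
  set L₂ := (B₂.map φ).flatten.length with hL₂
  set s₁ := (B₁.map φ).flatten.sum with hs₁
  set s₂ := (B₂.map φ).flatten.sum with hs₂
  have hb₁ : |s₁| ≤ (L₁ : ℤ) * m := hsum_bound _ (hT B₁ h₁)
  have hb₂ : |s₂| ≤ (L₂ : ℤ) * m := hsum_bound _ (hT B₂ h₂)
  rcases B₁ with _ | ⟨a, B₁'⟩
  · have hz1 : L₁ = 0 := by simp [hL₁]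
    have hz2 : s₁ = 0 := by simp [hs₁]
    rw [hz2]
    rw [hz1] at hlen
    simp only [Nat.cast_zero, zero_sub, abs_neg, abs_sub_comm, zero_sub, abs_neg] at *
    have : (L₂ : ℤ) ≤ 2 * (N : ℤ) - 2 := by
      rwa [abs_of_nonneg (by positivity)] at hlen
    nlinarith [abs_nonneg s₂]
  rcases B₂ with _ | ⟨b, B₂'⟩
  · have hz1 : L₂ = 0 := by simp [hL₂]
    have hz2 : s₂ = 0 := by simp [hs₂]
    rw [hz2]
    rw [hz1] at hlen
    have : (L₁ : ℤ) ≤ 2 * (N : ℤ) - 2 := by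
      rw [Nat.cast_zero, sub_zero, abs_of_nonneg (by positivity)] at hlen
      exact hlen
    simp only [sub_zero]
    nlinarith [abs_nonneg s₁]
  · -- both nonempty
    have hp₁ : 0 < L₁ := by
      have hne : φ a ≠ [] := (hφ a (h₁ a (by simp))).1
      have : 0 < (φ a).length := List.length_pos_iff.mpr hne
      simp only [hL₁, List.map_cons, List.flatten_cons, List.length_append]
      omega
    have hp₂ : 0 < L₂ := by
      have hne : φ b ≠ [] := (hφ b (h₂ b (by simp))).1
      have : 0 < (φ b).length := List.length_pos_iff.mpr hne
      simp only [hL₂, List.map_cons, List.flatten_cons, List.length_append]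
      omega
    have heq := hcond ((List.replicate L₂ (a :: B₁')).flatten)
      ((List.replicate L₁ (b :: B₂')).flatten)
      (hrepmem _ _ h₁) (hrepmem _ _ h₂)
      (by rw [(hrep L₂ (a :: B₁')).1, (hrep L₁ (b :: B₂')).1,
        ← hL₁, ← hL₂, Nat.mul_comm])
    rw [(hrep L₂ (a :: B₁')).2, (hrep L₁ (b :: B₂')).2, ← hs₁, ← hs₂] at heq
    have key : (L₁ : ℤ) * (s₁ - s₂) = s₁ * ((L₁ : ℤ) - (L₂ : ℤ)) := by
      linear_combination heq
    have habs : |s₁ - s₂| * (L₁ : ℤ) = |s₁| * |(L₁ : ℤ) - (L₂ : ℤ)| := by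
      have h := congrArg abs key
      rw [abs_mul, abs_mul, abs_of_nonneg (by positivity : (0:ℤ) ≤ (L₁:ℤ))] at h
      linear_combination h
    have hp₁' : (0:ℤ) < (L₁ : ℤ) := by exact_mod_cast hp₁
    nlinarith [abs_nonneg (s₁ - s₂), abs_nonneg s₁, abs_nonneg ((L₁:ℤ) - (L₂:ℤ)),
      mul_le_mul hb₁ hlen (abs_nonneg _) (by positivity : (0:ℤ) ≤ (L₁:ℤ)*m)]
end

section
/- Let S be a finite nonempty set of integers and let φ be an anchor on S, i.e., a non-erasing morphism such that for every infinite word ω over S the word φ(ω) has bounded additive complexity; equivalently, all letter images φ(s), s ∈ S, have a common slope ‖φ‖ (the weight of φ). Then for every infinite word ω over S, slope(φ(ω)) exists and equals ‖φ‖. -/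
lemma list_sum_range_map (f : ℕ → ℤ) (k : ℕ) :
    ((List.range k).map f).sum = ∑ i ∈ Finset.range k, f i := by
  induction k with
  | zero => simp
  | succ k ih => simp [List.range_succ, Finset.sum_range_succ, ih]

/-- If φ is an anchor on S with weight w (all letter images have slope w), then the
image of every infinite word over S has slope w. -/
theorem stmt14 (S : Finset ℤ) (hS : S.Nonempty) (φ : ℤ → List ℤ)
    (hφ : ∀ s ∈ S, φ s ≠ []) (w : ℚ) (hw : ∀ s ∈ S, wordSlope (φ s) = w) :
    ∀ ω : ℕ → ℤ, (∀ i : ℕ, ω i ∈ S) → ∀ ω' : ℕ → ℤ, IsImage φ ω ω' →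
      HasSlope ω' (w : ℝ) := by
  intro ω hω ω' him
  set L : ℕ → ℕ := fun n => (phiPrefix φ ω n).length with hLdef
  have hpre_succ : ∀ n, phiPrefix φ ω (n + 1) = phiPrefix φ ω n ++ φ (ω n) := by
    intro n; simp [phiPrefix, List.range_succ]
  have hL_succ : ∀ n, L (n + 1) = L n + (φ (ω n)).length := by
    intro n; simp [hLdef, hpre_succ n]
  have hlen_pos : ∀ n, 0 < (φ (ω n)).length := by
    intro n; exact List.length_pos_iff.mpr (hφ (ω n) (hω n))
  have hLge : ∀ n, n ≤ L n := by
    intro n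
    induction n with
    | zero => exact Nat.zero_le _
    | succ n ih =>
        have h1 := hlen_pos n
        rw [hL_succ n]; omega
  -- block sums
  have hblock : ∀ n, ((φ (ω n)).sum : ℚ) = w * ((φ (ω n)).length : ℚ) := by
    intro n
    have h := hw (ω n) (hω n)
    have hne : ((φ (ω n)).length : ℚ) ≠ 0 := by
      exact_mod_cast (hlen_pos n).ne'
    rw [wordSlope, div_eq_iff hne] at h
    exact h
  -- exact identity at block boundaries
  have hA : ∀ n, ((phiPrefix φ ω n).sum : ℚ) = w * (L n : ℚ) := by
    intro n
    induction n with
    | zero => simp [phiPrefix, hLdef]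
    | succ n ih =>
        rw [hpre_succ n, List.sum_append, hL_succ n, Int.cast_add, Nat.cast_add, ih,
          hblock n]
        ring
  set Sr : ℕ → ℝ := fun N => ∑ i ∈ Finset.range N, (ω' i : ℝ) with hSr
  have hB : ∀ n, Sr (L n) = (w : ℝ) * (L n : ℝ) := by
    intro n
    have h1 : (phiPrefix φ ω n).sum = ∑ i ∈ Finset.range (L n), ω' i := by
      rw [him n, list_sum_range_map]
    have h2 : ((phiPrefix φ ω n).sum : ℝ) = (w : ℝ) * (L n : ℝ) := by
      obtain ⟨z, hz⟩ : ∃ z : ℤ, (phiPrefix φ ω n).sum = z := ⟨_, rfl⟩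
      have h3 := hA n
      rw [hz] at h3 ⊢
      exact_mod_cast congrArg (fun q : ℚ => (q : ℝ)) h3
    rw [h1] at h2
    rw [hSr]
    push_cast at h2 ⊢
    exact h2
  -- uniform bound on letters of ω'
  set Cn : ℕ := (S.biUnion fun s => (φ s).toFinset).sup Int.natAbs with hCn
  have hCb : ∀ j : ℕ, |(ω' j : ℝ)| ≤ (Cn : ℝ) := by
    intro j
    have hjL : j < L (j + 1) := lt_of_lt_of_le (Nat.lt_succ_self j) (hLge (j + 1))
    have hmem : ω' j ∈ phiPrefix φ ω (j + 1) := by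
      rw [him (j + 1)]
      exact List.mem_map.mpr ⟨j, List.mem_range.mpr hjL, rfl⟩
    rw [phiPrefix] at hmem
    obtain ⟨l, hl, hmem'⟩ := List.mem_flatten.mp hmem
    obtain ⟨i, hi, rfl⟩ := List.mem_map.mp hl
    have : ω' j ∈ S.biUnion fun s => (φ s).toFinset :=
      Finset.mem_biUnion.mpr ⟨ω i, hω i, List.mem_toFinset.mpr hmem'⟩
    have hnat : (ω' j).natAbs ≤ Cn := Finset.le_sup this
    have : |ω' j| ≤ (Cn : ℤ) := by
      rw [Int.abs_eq_natAbs]; exact_mod_cast hnat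
    calc |(ω' j : ℝ)| = ((|ω' j| : ℤ) : ℝ) := by push_cast; rfl
      _ ≤ (Cn : ℝ) := by exact_mod_cast this
  -- block length bound
  set K : ℕ := S.sup fun s => (φ s).length with hK
  have hKb : ∀ n, (φ (ω n)).length ≤ K := fun n =>
    Finset.le_sup (f := fun s => (φ s).length) (hω n)
  set R : ℝ := ((Cn : ℝ) + |(w : ℝ)|) * (K : ℝ) with hR
  have key : ∀ N : ℕ, |Sr N - (w : ℝ) * N| ≤ R := by
    intro N
    have hex : ∃ m, N < L m := ⟨N + 1, lt_of_lt_of_le (Nat.lt_succ_self N) (hLge (N + 1))⟩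
    have hmlt0 : N < L (Nat.find hex) := Nat.find_spec hex
    have hm0 : Nat.find hex ≠ 0 := by
      intro h
      rw [h] at hmlt0
      simp [hLdef, phiPrefix] at hmlt0
    obtain ⟨n, hn⟩ : ∃ n, Nat.find hex = n + 1 :=
      ⟨Nat.find hex - 1, (Nat.succ_pred_eq_of_pos (Nat.pos_of_ne_zero hm0)).symm⟩
    rw [hn] at hmlt0
    have hmlt : N < L (n + 1) := hmlt0
    have hn1 : L n ≤ N := by
      by_contra h
      exact Nat.find_min hex (by rw [hn]; exact Nat.lt_succ_self n) (Nat.lt_of_not_le h)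
    -- split the sum
    have hsplit : Sr N = Sr (L n) + ∑ j ∈ Finset.Ico (L n) N, (ω' j : ℝ) := by
      rw [hSr]
      simp only [Finset.range_eq_Ico]
      rw [← Finset.sum_Ico_consecutive _ (Nat.zero_le (L n)) hn1]
    set d : ℕ := N - L n with hd
    have hdK : d ≤ K := by
      have : N < L n + (φ (ω n)).length := by rw [← hL_succ n]; exact hmlt
      have := hKb n
      omega
    have hNd : (N : ℝ) = (L n : ℝ) + (d : ℝ) := by
      rw [hd]; push_cast [Nat.cast_sub hn1]; ring
    have hcard : (Finset.Ico (L n) N).card = d := by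
      rw [Nat.card_Ico]
    have hsumb : |∑ j ∈ Finset.Ico (L n) N, (ω' j : ℝ)| ≤ (Cn : ℝ) * (d : ℝ) := by
      calc |∑ j ∈ Finset.Ico (L n) N, (ω' j : ℝ)|
          ≤ ∑ j ∈ Finset.Ico (L n) N, |(ω' j : ℝ)| := Finset.abs_sum_le_sum_abs _ _
        _ ≤ ∑ _j ∈ Finset.Ico (L n) N, (Cn : ℝ) := Finset.sum_le_sum fun j _ => hCb j
        _ = (Cn : ℝ) * (d : ℝ) := by rw [Finset.sum_const, hcard]; ring
    have heq : Sr N - (w : ℝ) * N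
        = (∑ j ∈ Finset.Ico (L n) N, (ω' j : ℝ)) - (w : ℝ) * (d : ℝ) := by
      rw [hsplit, hB n, hNd]; ring
    rw [heq]
    calc |(∑ j ∈ Finset.Ico (L n) N, (ω' j : ℝ)) - (w : ℝ) * (d : ℝ)|
        ≤ |∑ j ∈ Finset.Ico (L n) N, (ω' j : ℝ)| + |(w : ℝ) * (d : ℝ)| := abs_sub _ _
      _ ≤ (Cn : ℝ) * d + |(w : ℝ)| * d := by
          rw [abs_mul, abs_of_nonneg (by positivity : (0:ℝ) ≤ (d:ℝ))]
          exact add_le_add hsumb le_rfl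
      _ = ((Cn : ℝ) + |(w : ℝ)|) * d := by ring
      _ ≤ R := by
          rw [hR]
          have hd' : (d : ℝ) ≤ (K : ℝ) := by exact_mod_cast hdK
          have : (0:ℝ) ≤ (Cn : ℝ) + |(w : ℝ)| := by positivity
          exact mul_le_mul_of_nonneg_left hd' this
  -- conclude the limit
  have h0 : Filter.Tendsto (fun N : ℕ => Sr N / N - (w : ℝ)) Filter.atTop (nhds 0) := by
    apply squeeze_zero_norm' (a := fun N : ℕ => R / N)
    · filter_upwards [Filter.eventually_ge_atTop 1] with N hN
      have hN0 : (N : ℝ) ≠ 0 := by positivity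
      have hNpos : (0:ℝ) < N := by exact_mod_cast hN
      have heq : Sr N / N - (w : ℝ) = (Sr N - (w : ℝ) * N) / N := by
        field_simp
      rw [Real.norm_eq_abs, heq, abs_div, abs_of_pos hNpos]
      gcongr
      exact key N
    · exact tendsto_const_div_atTop_nhds_zero_nat R
  have := h0.add (tendsto_const_nhds (x := (w : ℝ)) (f := Filter.atTop))
  exact (by simpa using this : Filter.Tendsto (fun x => Sr x / (x : ℝ)) Filter.atTop (nhds (w : ℝ)))
end

section
/- Let n ≥ 1 and let ω₁, …, ω_n be infinite words over finite integer alphabets, each with bounded additive complexity and each with slope equal to the same real number α. Then every splice ω of {ω₁, …, ω_n} has bounded additive complexity and slope(ω) = α. -/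
/-- `L` is a prefix of the infinite word ω. -/
def PrefixOf (L : List ℤ) (ω : ℕ → ℤ) : Prop :=
  L = (List.range L.length).map ω

/-- ω is a splice of the infinite words `W 0, …, W (n-1)`. -/
def IsSplice {n : ℕ} (W : Fin n → ℕ → ℤ) (ω : ℕ → ℤ) : Prop :=
  ∃ B : Fin n → ℕ → List ℤ,
    (∀ i : Fin n, ∀ j : ℕ, PrefixOf (((List.range j).map (B i)).flatten) (W i)) ∧
    (∀ j : ℕ, ∃ j' : ℕ, j ≤ j' ∧ ∃ i : Fin n, B i j' ≠ []) ∧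
    (∀ j : ℕ,
      PrefixOf
        (((List.range j).map (fun jj => (List.ofFn (fun i : Fin n => B i jj)).flatten)).flatten)
        ω)

def pS (w : ℕ → ℤ) (m k : ℕ) : ℤ := ∑ t ∈ Finset.range k, w (m + t)

lemma pS_zero_left (w : ℕ → ℤ) (N : ℕ) : pS w 0 N = ∑ t ∈ Finset.range N, w t := by
  simp [pS]

lemma pS_add (w : ℕ → ℤ) (m a b : ℕ) :
    pS w m (a + b) = pS w m a + pS w (m + a) b := by
  unfold pS
  rw [Finset.sum_range_add]
  congr 1
  apply Finset.sum_congr rfl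
  intro t _
  congr 1
  omega

lemma pS_step (w : ℕ → ℤ) (m k : ℕ) :
    pS w (m + 1) k = pS w m k + w (m + k) - w m := by
  have h1 : pS w m (k + 1) = pS w m k + w (m + k) := Finset.sum_range_succ _ _
  have h2 : pS w m (k + 1) = w m + pS w (m + 1) k := by
    unfold pS
    rw [Finset.sum_range_succ']
    have : ∀ t, w (m + (t + 1)) = w (m + 1 + t) := fun t => by congr 1; omega
    simp only [this, Nat.add_zero]
    omega
  omega

lemma ivt_step (f : ℕ → ℤ) (d : ℤ) (hd : 0 < d) (hstep : ∀ j, f (j + 1) ≤ f j + d)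
    (v : ℤ) : ∀ m : ℕ, f 0 ≤ v → v ≤ f m → ∃ j, v ≤ f j ∧ f j < v + d := by
  intro m
  induction m with
  | zero => intro _ hm; exact ⟨0, hm, by omega⟩
  | succ m ih =>
    intro h0 hm
    by_cases h : v ≤ f m
    · exact ih h0 h
    · exact ⟨m + 1, hm, by have := hstep m; omega⟩

lemma chain_one (f : ℕ → ℤ) (d : ℤ) (hd : 0 < d) (hstep : ∀ j, f (j + 1) ≤ f j + d)
    (T : Finset ℤ) (hT : ∀ j, f j ∈ T) (m : ℕ) : f m - f 0 ≤ T.card * d := by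
  by_contra hcon
  push_neg at hcon
  have key : ∀ s : Fin (T.card + 1), ∃ j, f 0 + s.val * d ≤ f j ∧ f j < f 0 + s.val * d + d := by
    intro s
    have hs : s.val ≤ T.card := by omega
    have h1 : f 0 ≤ f 0 + s.val * d := by
      have : (0 : ℤ) ≤ (s.val : ℤ) * d := mul_nonneg (by positivity) hd.le
      linarith
    have h2 : f 0 + s.val * d ≤ f m := by
      have : (s.val : ℤ) * d ≤ (T.card : ℤ) * d :=
        mul_le_mul_of_nonneg_right (by exact_mod_cast hs) hd.le
      linarith
    obtain ⟨j, hj1, hj2⟩ := ivt_step f d hd hstep _ m h1 h2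
    exact ⟨j, hj1, hj2⟩
  choose g hg1 hg2 using key
  have hmono : ∀ s s' : Fin (T.card + 1), s.val < s'.val → f (g s) < f (g s') := by
    intro s s' h
    have h1 : ((s.val : ℤ) + 1) * d ≤ (s'.val : ℤ) * d := by
      apply mul_le_mul_of_nonneg_right _ hd.le
      exact_mod_cast h
    have := hg2 s; have := hg1 s'
    nlinarith
  have hinj : Set.InjOn (fun s : Fin (T.card + 1) => f (g s)) ↑(Finset.univ : Finset (Fin (T.card + 1))) := by
    intro s _ s' _ h
    rcases lt_trichotomy s.val s'.val with hlt | heq | hgt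
    · exact absurd h (hmono _ _ hlt).ne
    · exact Fin.ext heq
    · exact absurd h.symm (hmono _ _ hgt).ne
  have hcard := Finset.card_le_card_of_injOn (fun s : Fin (T.card + 1) => f (g s))
    (fun s _ => hT (g s)) hinj
  rw [Finset.card_univ, Fintype.card_fin] at hcard
  omega

lemma chain_abs (f : ℕ → ℤ) (d : ℤ) (hd : 0 < d) (hstep : ∀ j, |f (j + 1) - f j| ≤ d)
    (T : Finset ℤ) (hT : ∀ j, f j ∈ T) (m : ℕ) : |f m - f 0| ≤ T.card * d := by
  rw [abs_le]
  constructor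
  · have h := chain_one (fun j => -f j) d hd
      (fun j => by have := hstep j; rw [abs_le] at this; omega)
      (T.image (fun x => -x)) (fun j => Finset.mem_image_of_mem _ (hT j)) m
    have hc : ((T.image (fun x => -x)).card : ℤ) * d ≤ T.card * d := by
      apply mul_le_mul_of_nonneg_right _ hd.le
      exact_mod_cast Finset.card_image_le
    omega
  · exact chain_one f d hd (fun j => by have := hstep j; rw [abs_le] at this; omega) T hT m

open Filter in
lemma word_bound (w : ℕ → ℤ) (hfin : (Set.range w).Finite) (hb : BoundedAddComplexity w)
    (α : ℝ) (hs : HasSlope w α) :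
    ∃ C : ℝ, 0 ≤ C ∧ ∀ m k : ℕ, |((pS w m k : ℤ) : ℝ) - k * α| ≤ C := by
  -- bound on letters
  obtain ⟨K, hK⟩ := (hfin.image (fun x => |x|)).bddAbove
  simp only [upperBounds, Set.mem_image, Set.mem_range, Set.mem_setOf_eq] at hK
  have hKb : ∀ t, |w t| ≤ K := fun t => hK ⟨w t, ⟨t, rfl⟩, rfl⟩
  have hK0 : 0 ≤ K := le_trans (abs_nonneg _) (hKb 0)
  set d : ℤ := 2 * K + 1 with hd_def
  have hd : 0 < d := by omega
  obtain ⟨M, hM⟩ := hb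
  -- step bound
  have hstep : ∀ m k : ℕ, |pS w (m + 1) k - pS w m k| ≤ d := by
    intro m k
    rw [pS_step]
    have := hKb (m + k); have := hKb m
    rw [abs_le] at *
    omega
  -- uniform deviation within each length
  have hdev : ∀ k : ℕ, 1 ≤ k → ∀ m : ℕ, |pS w m k - pS w 0 k| ≤ (M : ℤ) * d := by
    intro k hk m
    obtain ⟨T, hTcard, hTmem⟩ := hM k hk
    have hT : ∀ m, pS w m k ∈ T := by
      intro m
      have hfac : Factor w ((List.range k).map (fun t => w (m + t))) := by
        refine ⟨m, ?_⟩
        simp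
      have := hTmem _ hfac (by simp)
      exact this
    have := chain_abs (fun m => pS w m k) d hd (fun j => hstep j k) T hT m
    have hc : (T.card : ℤ) * d ≤ (M : ℤ) * d :=
      mul_le_mul_of_nonneg_right (by exact_mod_cast hTcard) hd.le
    omega
  -- block decomposition
  have hblock : ∀ k j : ℕ, pS w 0 (j * k) = ∑ t ∈ Finset.range j, pS w (t * k) k := by
    intro k j
    induction j with
    | zero => simp [pS]
    | succ j ih =>
      rw [Nat.succ_mul, pS_add, ih, Finset.sum_range_succ]
      simp
  -- bounds on pS w 0 (j*k)
  have hub : ∀ k, 1 ≤ k → ∀ j : ℕ,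
      (j : ℤ) * (pS w 0 k - M * d) ≤ pS w 0 (j * k) ∧
      pS w 0 (j * k) ≤ (j : ℤ) * (pS w 0 k + M * d) := by
    intro k hk j
    rw [hblock k j]
    constructor
    · calc (j : ℤ) * (pS w 0 k - M * d) = ∑ _t ∈ Finset.range j, (pS w 0 k - M * d) := by
            rw [Finset.sum_const, Finset.card_range, nsmul_eq_mul]
        _ ≤ ∑ t ∈ Finset.range j, pS w (t * k) k := by
            apply Finset.sum_le_sum
            intro t _
            have := hdev k hk (t * k)
            rw [abs_le] at this
            omega
    · calc ∑ t ∈ Finset.range j, pS w (t * k) k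
          ≤ ∑ _t ∈ Finset.range j, (pS w 0 k + M * d) := by
            apply Finset.sum_le_sum
            intro t _
            have := hdev k hk (t * k)
            rw [abs_le] at this
            omega
        _ = (j : ℤ) * (pS w 0 k + M * d) := by
            rw [Finset.sum_const, Finset.card_range, nsmul_eq_mul]
  -- prefix sums as reals
  have hps0 : ∀ N : ℕ, ((pS w 0 N : ℤ) : ℝ) = ∑ i ∈ Finset.range N, (w i : ℝ) := by
    intro N
    rw [pS_zero_left]
    push_cast
    rfl
  -- the limit argument
  have hmid : ∀ k : ℕ, 1 ≤ k → |((pS w 0 k : ℤ) : ℝ) - k * α| ≤ ((M : ℤ) * d : ℤ) := by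
    intro k hk
    have hkpos : (0 : ℝ) < k := by exact_mod_cast hk
    have hmulk : Tendsto (fun j : ℕ => j * k) atTop atTop :=
      tendsto_atTop_mono (fun j => Nat.le_mul_of_pos_right j (by omega)) tendsto_id
    have h1 : Tendsto (fun j : ℕ => (∑ i ∈ Finset.range (j * k), ((w i : ℤ) : ℝ)) / ((j : ℝ) * (k : ℝ)))
        atTop (nhds α) := by
      have := hs.comp hmulk
      simpa [Function.comp_def] using this
    have h2 : Tendsto (fun j : ℕ => ((pS w 0 (j * k) : ℤ) : ℝ) / (j : ℝ))
        atTop (nhds ((k : ℝ) * α)) := by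
      have h3 := h1.const_mul (k : ℝ)
      refine h3.congr ?_
      intro j
      rw [← hps0]
      rcases Nat.eq_zero_or_pos j with hj | hj
      · subst hj; simp [pS]
      · have hj0 : (j : ℝ) ≠ 0 := by positivity
        have hk0 : (k : ℝ) ≠ 0 := by positivity
        field_simp
    have hle : (k : ℝ) * α ≤ ((pS w 0 k : ℤ) : ℝ) + (((M : ℤ) * d : ℤ) : ℝ) := by
      apply le_of_tendsto h2
      filter_upwards [eventually_ge_atTop 1] with j hj
      have hjpos : (0 : ℝ) < j := by exact_mod_cast hj
      have thisR : ((pS w 0 (j * k) : ℤ) : ℝ) ≤ (j : ℝ) * (((pS w 0 k : ℤ) : ℝ) + (M : ℝ) * ((d : ℤ) : ℝ)) := by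
        exact_mod_cast (hub k hk j).2
      rw [div_le_iff₀ hjpos]
      push_cast
      nlinarith [thisR]
    have hge : ((pS w 0 k : ℤ) : ℝ) - (((M : ℤ) * d : ℤ) : ℝ) ≤ (k : ℝ) * α := by
      apply ge_of_tendsto h2
      filter_upwards [eventually_ge_atTop 1] with j hj
      have hjpos : (0 : ℝ) < j := by exact_mod_cast hj
      have thisR : (j : ℝ) * (((pS w 0 k : ℤ) : ℝ) - (M : ℝ) * ((d : ℤ) : ℝ)) ≤ ((pS w 0 (j * k) : ℤ) : ℝ) := by
        exact_mod_cast (hub k hk j).1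
      rw [le_div_iff₀ hjpos]
      push_cast
      nlinarith [thisR]
    rw [abs_le]
    constructor
    · push_cast at hle ⊢; linarith
    · push_cast at hge ⊢; linarith
  have hMd0 : (0 : ℤ) ≤ (M : ℤ) * d := mul_nonneg (Int.natCast_nonneg M) hd.le
  refine ⟨((2 * ((M : ℤ) * d) : ℤ) : ℝ), by exact_mod_cast (by omega : (0:ℤ) ≤ 2 * ((M:ℤ) * d)), ?_⟩
  intro m k
  rcases Nat.eq_zero_or_pos k with hk | hk
  · subst hk
    have h0 : ((0 : ℤ) : ℝ) ≤ ((2 * ((M : ℤ) * d) : ℤ) : ℝ) := by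
      exact_mod_cast (show (0:ℤ) ≤ 2 * ((M:ℤ) * d) by omega)
    simpa [pS] using h0
  · have h1 := hdev k hk m
    have h2 := hmid k hk
    have h1' : |((pS w m k : ℤ) : ℝ) - ((pS w 0 k : ℤ) : ℝ)| ≤ (((M : ℤ) * d : ℤ) : ℝ) := by
      rw [← Int.cast_sub, ← Int.cast_abs]
      exact_mod_cast h1
    calc |((pS w m k : ℤ) : ℝ) - k * α|
        ≤ |((pS w m k : ℤ) : ℝ) - ((pS w 0 k : ℤ) : ℝ)| + |((pS w 0 k : ℤ) : ℝ) - k * α| :=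
          abs_sub_le _ _ _
      _ ≤ (((M : ℤ) * d : ℤ) : ℝ) + (((M : ℤ) * d : ℤ) : ℝ) := add_le_add h1' h2
      _ = ((2 * ((M : ℤ) * d) : ℤ) : ℝ) := by push_cast; ring

lemma prefix_suffix_eq (L1 L2 : List ℤ) (w : ℕ → ℤ) (h : PrefixOf (L1 ++ L2) w) :
    L2 = (List.range L2.length).map (fun t => w (L1.length + t)) := by
  unfold PrefixOf at h
  rw [List.length_append, List.range_add, List.map_append] at h
  have h2 := (List.append_inj h (by simp)).2
  conv_lhs => rw [h2]
  rw [List.map_map]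
  simp [Function.comp]

lemma seg_take_sum (L1 L2 : List ℤ) (w : ℕ → ℤ) (h : PrefixOf (L1 ++ L2) w)
    (s : ℕ) (hs : s ≤ L2.length) :
    (L2.take s).sum = pS w L1.length s := by
  conv_lhs => rw [prefix_suffix_eq L1 L2 w h]
  rw [← List.map_take, List.take_range, min_eq_left hs]
  rfl

lemma seg_sum (L1 L2 : List ℤ) (w : ℕ → ℤ) (h : PrefixOf (L1 ++ L2) w) :
    L2.sum = pS w L1.length L2.length := by
  have := seg_take_sum L1 L2 w h L2.length le_rfl
  simpa using this

lemma prefix_take_sum (L : List ℤ) (w : ℕ → ℤ) (h : PrefixOf L w)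
    (s : ℕ) (hs : s ≤ L.length) :
    (L.take s).sum = ∑ t ∈ Finset.range s, w t := by
  have := seg_take_sum [] L w (by simpa using h) s hs
  simpa [pS] using this

lemma prefix_sum (L : List ℤ) (w : ℕ → ℤ) (h : PrefixOf L w) :
    L.sum = ∑ t ∈ Finset.range L.length, w t := by
  have := prefix_take_sum L w h L.length le_rfl
  simpa using this

lemma take_flatten (ℓ : List (List ℤ)) (N : ℕ) (hN : N ≤ ℓ.flatten.length) :
    ∃ q r : ℕ, q ≤ ℓ.length ∧ r ≤ (ℓ.getD q []).length ∧
      (ℓ.take q).flatten.length + r = N ∧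
      ℓ.flatten.take N = (ℓ.take q).flatten ++ (ℓ.getD q []).take r := by
  induction ℓ generalizing N with
  | nil =>
    have : N = 0 := by simpa using hN
    subst this
    exact ⟨0, 0, by simp, by simp, by simp, by simp⟩
  | cons hd tl ih =>
    by_cases h : N ≤ hd.length
    · refine ⟨0, N, by simp, by simpa using h, by simp, ?_⟩
      simp only [List.flatten_cons, List.take_zero, List.flatten_nil, List.nil_append,
        List.getD_cons_zero]
      exact List.take_append_of_le_length h
    · push_neg at h
      obtain ⟨q, r, h1, h2, h3, h4⟩ := ih (N - hd.length) (by
        simp only [List.flatten_cons, List.length_append] at hN; omega)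
      refine ⟨q + 1, r, by simpa using h1, by simpa using h2, ?_, ?_⟩
      · simp only [List.take_succ_cons, List.flatten_cons, List.length_append]
        omega
      · have hsplit : N = hd.length + (N - hd.length) := by omega
        rw [List.flatten_cons, hsplit, List.take_length_add_append, h4, List.take_succ_cons,
          List.flatten_cons, List.append_assoc, List.getD_cons_succ]

lemma ofFn_flatten_eq (n : ℕ) (B : Fin n → ℕ → List ℤ) (j : ℕ) :
    (List.ofFn (fun i : Fin n => B i j)).flatten
      = ((List.range n).map (fun i => if h : i < n then B ⟨i, h⟩ j else [])).flatten := by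
  congr 1
  apply List.ext_getElem
  · simp
  · intro i h1 h2
    simp only [List.getElem_ofFn, List.getElem_map, List.getElem_range]
    rw [dif_pos (by simpa using h2)]

lemma splice_decomp (n : ℕ) (W : Fin n → ℕ → ℤ) (ω : ℕ → ℤ) (hω : IsSplice W ω) (N : ℕ) :
    ∃ a b : Fin n → ℕ,
      (∑ i : Fin n, (a i + b i)) = N ∧
      (∑ t ∈ Finset.range N, ω t)
        = ∑ i : Fin n, (pS (W i) 0 (a i) + pS (W i) (a i) (b i)) := by
  obtain ⟨B, hBpre, hBinf, hωpre⟩ := hω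
  set B' : ℕ → ℕ → List ℤ := fun i j => if h : i < n then B ⟨i, h⟩ j else [] with hB'
  set W' : ℕ → ℕ → ℤ := fun i => if h : i < n then W ⟨i, h⟩ else fun _ => 0 with hW'
  set R : ℕ → List ℤ := fun j => ((List.range n).map (fun i => B' i j)).flatten with hRdef
  set D : ℕ → ℕ → ℕ := fun i q => ∑ jj ∈ Finset.range q, (B' i jj).length with hDdef
  have hB'lt : ∀ i (h : i < n) j, B' i j = B ⟨i, h⟩ j := fun i h j => dif_pos h
  have hB'ge : ∀ i, n ≤ i → ∀ j, B' i j = [] := fun i h j => dif_neg (by omega)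
  have hW'lt : ∀ i : Fin n, W' i.val = W i := fun i => dif_pos i.isLt
  -- G1 : per-word prefixes
  have hG1 : ∀ i q, PrefixOf (((List.range q).map (B' i)).flatten) (W' i) := by
    intro i q
    by_cases h : i < n
    · have hfun : B' i = B ⟨i, h⟩ := funext fun j => hB'lt i h j
      have hWf : W' i = W ⟨i, h⟩ := by simp only [hW']; exact dif_pos h
      rw [hfun, hWf]
      exact hBpre ⟨i, h⟩ q
    · push_neg at h
      have hfun : B' i = fun _ => ([] : List ℤ) := funext fun j => hB'ge i h j
      rw [hfun]
      have : (((List.range q).map (fun _ => ([] : List ℤ))).flatten) = [] := by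
        simp
      rw [this]
      rfl
  -- G2 : lengths of per-word prefixes
  have hG2 : ∀ i q, (((List.range q).map (B' i)).flatten).length = D i q := by
    intro i q
    rw [List.length_flatten, List.map_map]
    rfl
  -- G3 : prefix followed by the next block
  have hG3 : ∀ i q, PrefixOf ((((List.range q).map (B' i)).flatten) ++ B' i q) (W' i) := by
    intro i q
    have := hG1 i (q + 1)
    rwa [List.range_succ, List.map_append, List.map_singleton, List.flatten_concat] at this
  -- G4 : sums of take of a block
  have hG4 : ∀ i q s, s ≤ (B' i q).length →
      ((B' i q).take s).sum = pS (W' i) (D i q) s := by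
    intro i q s hs
    have := seg_take_sum _ _ _ (hG3 i q) s hs
    rwa [hG2 i q] at this
  -- G5 : sums of per-word prefixes
  have hG5 : ∀ i q, (((List.range q).map (B' i)).flatten).sum = pS (W' i) 0 (D i q) := by
    intro i q
    have := prefix_sum _ _ (hG1 i q)
    rw [hG2 i q] at this
    rw [this, pS_zero_left]
  -- G6 : round lengths and sums
  have hG6l : ∀ j, (R j).length = ∑ i ∈ Finset.range n, (B' i j).length := by
    intro j
    rw [hRdef]
    rw [List.length_flatten, List.map_map]
    rfl
  have hG6s : ∀ j, (R j).sum = ∑ i ∈ Finset.range n, (B' i j).sum := by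
    intro j
    rw [hRdef]
    rw [List.sum_flatten, List.map_map]
    rfl
  -- G7 : prefixes of ω
  have hG7 : ∀ j, PrefixOf (((List.range j).map R).flatten) ω := by
    intro j
    have := hωpre j
    have hmapeq : (List.range j).map (fun jj => (List.ofFn (fun i : Fin n => B i jj)).flatten)
        = (List.range j).map R := by
      apply List.map_congr_left
      intro jj _
      rw [hRdef]
      exact ofFn_flatten_eq n B jj
    rwa [hmapeq] at this
  -- G8 : outer lengths and sums
  have hG8l : ∀ q, (((List.range q).map R).flatten).length = ∑ jj ∈ Finset.range q, (R jj).length := by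
    intro q
    rw [List.length_flatten, List.map_map]
    rfl
  have hG8s : ∀ q, (((List.range q).map R).flatten).sum = ∑ jj ∈ Finset.range q, (R jj).sum := by
    intro q
    rw [List.sum_flatten, List.map_map]
    rfl
  -- G9 : unbounded lengths
  have hG9 : ∀ N, ∃ j, N ≤ (((List.range j).map R).flatten).length := by
    intro N
    induction N with
    | zero => exact ⟨0, Nat.zero_le _⟩
    | succ N ihN =>
      obtain ⟨j, hj⟩ := ihN
      obtain ⟨j', hjj', i, hne⟩ := hBinf j
      refine ⟨j' + 1, ?_⟩
      rw [hG8l] at hj ⊢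
      rw [Finset.sum_range_succ]
      have hmono : ∑ jj ∈ Finset.range j, (R jj).length ≤ ∑ jj ∈ Finset.range j', (R jj).length :=
        Finset.sum_le_sum_of_subset (Finset.range_subset_range.mpr hjj')
      have hpos : 1 ≤ (R j').length := by
        rw [hG6l]
        have hmem : i.val ∈ Finset.range n := Finset.mem_range.mpr i.isLt
        have hlen : 1 ≤ (B' i.val j').length := by
          rw [hB'lt i.val i.isLt j']
          have : B ⟨i.val, i.isLt⟩ j' = B i j' := by congr
          rw [this]
          exact Nat.one_le_iff_ne_zero.mpr (fun hc => hne (List.length_eq_zero_iff.mp hc))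
        calc 1 ≤ (B' i.val j').length := hlen
          _ ≤ ∑ i' ∈ Finset.range n, (B' i' j').length :=
              Finset.single_le_sum (f := fun i' => (B' i' j').length)
                (fun _ _ => Nat.zero_le _) hmem
      omega
  -- main argument
  obtain ⟨j, hjN⟩ := hG9 N
  obtain ⟨q, r, hq, hr, hlen1, htake1⟩ := take_flatten ((List.range j).map R) N hjN
  have hqj : q ≤ j := by simpa using hq
  have htakeq : ((List.range j).map R).take q = (List.range q).map R := by
    rw [← List.map_take, List.take_range, min_eq_left hqj]
  -- inner decomposition
  have hinner : ∃ p s : ℕ, p ≤ n ∧ s ≤ (B' p q).length ∧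
      (∑ i ∈ Finset.range p, (B' i q).length) + s = r ∧
      (((((List.range j).map R).getD q []).take r).sum
        = (∑ i ∈ Finset.range p, (B' i q).sum) + ((B' p q).take s).sum) := by
    by_cases hqlt : q < j
    · have hPR : ((List.range j).map R).getD q [] = R q := by
        rw [List.getD_eq_getElem _ _ (by simpa using hqlt)]
        simp
      rw [hPR] at hr ⊢
      obtain ⟨p, s, hp, hs, hlen2, htake2⟩ := take_flatten ((List.range n).map (fun i => B' i q)) r
        (show r ≤ ((List.range n).map (fun i => B' i q)).flatten.length from hr)
      have hpn : p ≤ n := by simpa using hp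
      have hgetD : ((List.range n).map (fun i => B' i q)).getD p [] = B' p q := by
        rcases Nat.lt_or_ge p n with hplt | hpge
        · rw [List.getD_eq_getElem _ _ (by simpa using hplt)]
          simp
        · rw [List.getD_eq_default _ _ (by simpa using hpge)]
          rw [hB'ge p hpge q]
      rw [hgetD] at hs htake2
      have htakep : ((List.range n).map (fun i => B' i q)).take p = (List.range p).map (fun i => B' i q) := by
        rw [← List.map_take, List.take_range, min_eq_left hpn]
      rw [htakep] at hlen2 htake2
      have hlenp : (((List.range p).map (fun i => B' i q)).flatten).length
          = ∑ i ∈ Finset.range p, (B' i q).length := by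
        rw [List.length_flatten, List.map_map]; rfl
      have hsump : (((List.range p).map (fun i => B' i q)).flatten).sum
          = ∑ i ∈ Finset.range p, (B' i q).sum := by
        rw [List.sum_flatten, List.map_map]; rfl
      refine ⟨p, s, hpn, hs, by rw [← hlenp]; exact hlen2, ?_⟩
      have hRq : R q = ((List.range n).map (fun i => B' i q)).flatten := rfl
      rw [hRq, htake2, List.sum_append, hsump]
    · have hqeq : q = j := by omega
      have hgd : ((List.range j).map R).getD q [] = [] := by
        apply List.getD_eq_default
        simpa using hqeq.ge
      have hr0 : r = 0 := by
        rw [hgd] at hr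
        simpa using hr
      refine ⟨0, 0, Nat.zero_le _, Nat.zero_le _, by simp [hr0], ?_⟩
      rw [hgd, hr0]
      simp
  obtain ⟨p, s, hpn, hs, hlen2, hsum2⟩ := hinner
  -- the assignments
  set b' : ℕ → ℕ := fun i => if i < p then (B' i q).length else if i = p then s else 0 with hb'def
  have hs0 : p = n → s = 0 := by
    intro hpe
    have : (B' p q).length = 0 := by rw [hB'ge p hpe.ge q]; rfl
    omega
  -- sum of b'
  have hbsum : ∑ i ∈ Finset.range n, b' i = (∑ i ∈ Finset.range p, (B' i q).length) + s := by
    rw [← Finset.sum_range_add_sum_Ico _ hpn]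
    congr 1
    · apply Finset.sum_congr rfl
      intro i hi
      have hi' := Finset.mem_range.mp hi
      simp [hb'def, hi']
    · rcases Nat.lt_or_ge p n with hplt | hpge
      · rw [Finset.sum_eq_single_of_mem p (Finset.mem_Ico.mpr ⟨le_rfl, hplt⟩)]
        · simp [hb'def]
        · intro x hx hxp
          have hx' := Finset.mem_Ico.mp hx
          have h1 : ¬ x < p := by omega
          simp [hb'def, h1, hxp]
      · have hpe : p = n := le_antisymm hpn hpge
        have hIco : Finset.Ico p n = ∅ := by rw [hpe]; exact Finset.Ico_self _
        rw [hIco, Finset.sum_empty, hs0 hpe]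
  -- second-sum identity
  have hsecond : ∑ i ∈ Finset.range n, pS (W' i) (D i q) (b' i)
      = (∑ i ∈ Finset.range p, pS (W' i) (D i q) (B' i q).length) + pS (W' p) (D p q) s := by
    rw [← Finset.sum_range_add_sum_Ico _ hpn]
    congr 1
    · apply Finset.sum_congr rfl
      intro i hi
      have hi' := Finset.mem_range.mp hi
      simp [hb'def, hi']
    · rcases Nat.lt_or_ge p n with hplt | hpge
      · rw [Finset.sum_eq_single_of_mem p (Finset.mem_Ico.mpr ⟨le_rfl, hplt⟩)]
        · simp [hb'def]
        · intro x hx hxp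
          have hx' := Finset.mem_Ico.mp hx
          have h1 : ¬ x < p := by omega
          have hbx : b' x = 0 := by simp [hb'def, h1, hxp]
          rw [hbx]
          simp [pS]
      · have hpe : p = n := le_antisymm hpn hpge
        have hIco : Finset.Ico p n = ∅ := by rw [hpe]; exact Finset.Ico_self _
        rw [hIco, Finset.sum_empty, hs0 hpe]
        simp [pS]
  -- first part sums
  have hfirstlen : (((List.range q).map R).flatten).length = ∑ i ∈ Finset.range n, D i q := by
    rw [hG8l]
    rw [hDdef]
    simp only
    rw [Finset.sum_comm]
    apply Finset.sum_congr rfl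
    intro jj _
    exact hG6l jj
  have hfirstsum : (((List.range q).map R).flatten).sum = ∑ i ∈ Finset.range n, pS (W' i) 0 (D i q) := by
    rw [hG8s]
    have : ∑ jj ∈ Finset.range q, (R jj).sum = ∑ i ∈ Finset.range n, ∑ jj ∈ Finset.range q, (B' i jj).sum := by
      rw [Finset.sum_comm]
      apply Finset.sum_congr rfl
      intro jj _
      exact hG6s jj
    rw [this]
    apply Finset.sum_congr rfl
    intro i _
    have hflat : ∑ jj ∈ Finset.range q, (B' i jj).sum = (((List.range q).map (B' i)).flatten).sum := by
      rw [List.sum_flatten, List.map_map]; rfl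
    rw [hflat, hG5 i q]
  -- conclude
  refine ⟨fun i => D i.val q, fun i => b' i.val, ?_, ?_⟩
  · have := Fin.sum_univ_eq_sum_range (fun i => D i q + b' i) n
    rw [this, Finset.sum_add_distrib, hbsum]
    rw [htakeq, hfirstlen] at hlen1
    omega
  · have hLHS : (∑ t ∈ Finset.range N, ω t) = ((((List.range j).map R).flatten).take N).sum := by
      rw [prefix_take_sum _ _ (hG7 j) N hjN]
    rw [hLHS, htake1, List.sum_append, htakeq, hfirstsum, hsum2]
    have hRHS : ∑ i : Fin n, (pS (W i) 0 (D i.val q) + pS (W i) (D i.val q) (b' i.val))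
        = ∑ i ∈ Finset.range n, (pS (W' i) 0 (D i q) + pS (W' i) (D i q) (b' i)) := by
      rw [← Fin.sum_univ_eq_sum_range (fun i => pS (W' i) 0 (D i q) + pS (W' i) (D i q) (b' i)) n]
      apply Finset.sum_congr rfl
      intro i _
      rw [hW'lt i]
    rw [hRHS, Finset.sum_add_distrib, hsecond]
    have hconv : ∑ i ∈ Finset.range p, pS (W' i) (D i q) (B' i q).length
        = ∑ i ∈ Finset.range p, (B' i q).sum := by
      apply Finset.sum_congr rfl
      intro i _
      rw [← hG4 i q _ le_rfl, List.take_length]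
    rw [hconv, hG4 p q s hs]
    try ring

open Filter

/-- Any splice of words with bounded additive complexity, all of slope α, has bounded
additive complexity and slope α. -/
theorem stmt16 (n : ℕ) (hn : 1 ≤ n) (W : Fin n → ℕ → ℤ)
    (hfin : ∀ i : Fin n, (Set.range (W i)).Finite)
    (hb : ∀ i : Fin n, BoundedAddComplexity (W i))
    (α : ℝ) (hs : ∀ i : Fin n, HasSlope (W i) α)
    (ω : ℕ → ℤ) (hω : IsSplice W ω) :
    BoundedAddComplexity ω ∧ HasSlope ω α := by
  choose C hC0 hC using fun i : Fin n => word_bound (W i) (hfin i) (hb i) α (hs i)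
  set Cs : ℝ := ∑ i : Fin n, C i with hCsdef
  have hCs0 : 0 ≤ Cs := Finset.sum_nonneg (fun i _ => hC0 i)
  -- prefix-sum bound
  have hpref : ∀ N : ℕ, |((pS ω 0 N : ℤ) : ℝ) - N * α| ≤ 2 * Cs := by
    intro N
    obtain ⟨a, b, habN, hsum⟩ := splice_decomp n W ω hω N
    rw [pS_zero_left, hsum]
    have hN' : ((N : ℕ) : ℝ) = ∑ i : Fin n, ((a i : ℝ) + (b i : ℝ)) := by
      rw [← habN]; push_cast; rfl
    have hkey : ((∑ i : Fin n, (pS (W i) 0 (a i) + pS (W i) (a i) (b i)) : ℤ) : ℝ) - N * α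
        = ∑ i : Fin n, ((((pS (W i) 0 (a i) : ℤ) : ℝ) - (a i : ℝ) * α)
            + (((pS (W i) (a i) (b i) : ℤ) : ℝ) - (b i : ℝ) * α)) := by
      rw [hN', Finset.sum_mul]
      push_cast
      rw [← Finset.sum_sub_distrib]
      apply Finset.sum_congr rfl
      intro i _
      ring
    rw [hkey]
    calc |∑ i : Fin n, ((((pS (W i) 0 (a i) : ℤ) : ℝ) - (a i : ℝ) * α)
            + (((pS (W i) (a i) (b i) : ℤ) : ℝ) - (b i : ℝ) * α))|
        ≤ ∑ i : Fin n, |(((pS (W i) 0 (a i) : ℤ) : ℝ) - (a i : ℝ) * α)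
            + (((pS (W i) (a i) (b i) : ℤ) : ℝ) - (b i : ℝ) * α)| :=
          Finset.abs_sum_le_sum_abs _ _
      _ ≤ ∑ i : Fin n, (C i + C i) := by
          apply Finset.sum_le_sum
          intro i _
          calc |(((pS (W i) 0 (a i) : ℤ) : ℝ) - (a i : ℝ) * α)
              + (((pS (W i) (a i) (b i) : ℤ) : ℝ) - (b i : ℝ) * α)|
              ≤ |(((pS (W i) 0 (a i) : ℤ) : ℝ) - (a i : ℝ) * α)|
                + |(((pS (W i) (a i) (b i) : ℤ) : ℝ) - (b i : ℝ) * α)| := abs_add_le _ _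
            _ ≤ C i + C i := add_le_add (hC i 0 (a i)) (hC i (a i) (b i))
      _ = 2 * Cs := by rw [Finset.sum_add_distrib, ← hCsdef]; ring
  -- factor bound
  have hfac : ∀ m k : ℕ, |((pS ω m k : ℤ) : ℝ) - k * α| ≤ 4 * Cs := by
    intro m k
    have h1 := hpref (m + k)
    have h2 := hpref m
    have e : pS ω 0 (m + k) = pS ω 0 m + pS ω m k := by
      have := pS_add ω 0 m k
      simpa using this
    have h3 : ((pS ω m k : ℤ) : ℝ) - k * α
        = (((pS ω 0 (m + k) : ℤ) : ℝ) - (m + k : ℕ) * α)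
          - (((pS ω 0 m : ℤ) : ℝ) - m * α) := by
      rw [e]; push_cast; ring
    rw [h3]
    calc |(((pS ω 0 (m + k) : ℤ) : ℝ) - (m + k : ℕ) * α)
          - (((pS ω 0 m : ℤ) : ℝ) - m * α)|
        ≤ |(((pS ω 0 (m + k) : ℤ) : ℝ) - (m + k : ℕ) * α)|
          + |(((pS ω 0 m : ℤ) : ℝ) - m * α)| := abs_sub _ _
      _ ≤ 2 * Cs + 2 * Cs := add_le_add h1 h2
      _ = 4 * Cs := by ring
  obtain ⟨c, hc⟩ := exists_nat_ge (4 * Cs)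
  constructor
  · -- bounded additive complexity
    refine ⟨2 * c + 1, ?_⟩
    intro k hk
    refine ⟨Finset.Icc (⌊(k : ℝ) * α⌋ - c) (⌊(k : ℝ) * α⌋ + c), ?_, ?_⟩
    · rw [Int.card_Icc]
      omega
    · intro B hFac hlen
      obtain ⟨m, hm⟩ := hFac
      have hBsum : B.sum = pS ω m k := by
        have h := congrArg List.sum hm
        have h2 : ((List.range B.length).map (fun i => ω (m + i))).sum = pS ω m B.length := rfl
        rw [h2, hlen] at h
        exact h
      rw [hBsum]
      have hb1 := hfac m k
      rw [abs_le] at hb1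
      have hlow : (⌊(k : ℝ) * α⌋ - c : ℤ) ≤ pS ω m k := by
        have hfl : (⌊(k : ℝ) * α⌋ : ℝ) ≤ ((pS ω m k + c : ℤ) : ℝ) := by
          push_cast
          have := Int.floor_le ((k : ℝ) * α)
          linarith [hb1.1]
        have : (⌊(k : ℝ) * α⌋ : ℤ) ≤ pS ω m k + c := by exact_mod_cast hfl
        omega
      have hhigh : pS ω m k ≤ ⌊(k : ℝ) * α⌋ + c := by
        have hfl : ((pS ω m k : ℤ) : ℝ) < ((⌊(k : ℝ) * α⌋ + c + 1 : ℤ) : ℝ) := by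
          push_cast
          have := Int.lt_floor_add_one ((k : ℝ) * α)
          linarith [hb1.2]
        have : (pS ω m k : ℤ) < ⌊(k : ℝ) * α⌋ + c + 1 := by exact_mod_cast hfl
        omega
      exact Finset.mem_Icc.mpr ⟨hlow, hhigh⟩
  · -- slope
    have h0 : Tendsto (fun N : ℕ => (∑ i ∈ Finset.range N, (ω i : ℝ)) / N - α)
        atTop (nhds 0) := by
      apply squeeze_zero_norm' (a := fun N : ℕ => 2 * Cs / N)
      · filter_upwards [eventually_ge_atTop 1] with N hN
        have hNpos : (0 : ℝ) < N := by exact_mod_cast hN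
        have hcast : (∑ i ∈ Finset.range N, (ω i : ℝ)) = ((pS ω 0 N : ℤ) : ℝ) := by
          rw [pS_zero_left]; push_cast; rfl
        have heq : (∑ i ∈ Finset.range N, (ω i : ℝ)) / N - α
            = (((pS ω 0 N : ℤ) : ℝ) - N * α) / N := by
          rw [hcast]
          field_simp
        rw [Real.norm_eq_abs, heq, abs_div, abs_of_pos hNpos]
        exact div_le_div_of_nonneg_right (hpref N) hNpos.le
      · exact tendsto_const_div_atTop_nhds_zero_nat (2 * Cs)
    have := h0.add_const α
    simpa [HasSlope] using this
end

section
/- For every k ≥ 1 there exists a recurrent infinite word ω with range contained in {0, 1, 2, …, 2k} such that the additive complexity of ω satisfies ρ(n) = 2k + 1 for all n ≥ 1. -/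
/-- ω is recurrent: every factor occurs at arbitrarily large positions. -/
def Recurrent (ω : ℕ → ℤ) : Prop :=
  ∀ B : List ℤ, Factor ω B → ∀ m₀ : ℕ, ∃ m : ℕ, m₀ ≤ m ∧
    B = (List.range B.length).map (fun i => ω (m + i))


/-- gadget block for window length `n`: concatenation over `v = 0..k` of `0^n v 0^n`. -/
def blk (k n : ℕ) : List ℤ :=
  (List.range ((k+1)*(2*n+1))).map
    (fun i => if i % (2*n+1) = n then ((i / (2*n+1) : ℕ) : ℤ) else 0)

def W (k : ℕ) : ℕ → List ℤ
  | 0 => [0]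
  | j+1 => W k j ++ (W k j ++ blk k (j+1))

def ee (k m : ℕ) : ℤ := (W k (m+1)).getD m 0

def om (k m : ℕ) : ℤ := (k : ℤ) + ee k (m+1) - ee k m

lemma blk_length (k n : ℕ) : (blk k n).length = (k+1)*(2*n+1) := by
  simp [blk]

lemma W_prefix_succ (k j : ℕ) : W k j <+: W k (j+1) := by
  rw [show W k (j+1) = W k j ++ (W k j ++ blk k (j+1)) from rfl]
  exact List.prefix_append _ _

lemma W_prefix (k : ℕ) {i j : ℕ} (h : i ≤ j) : W k i <+: W k j := by
  induction j with
  | zero => simpa [Nat.le_zero.mp h]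
  | succ j ih =>
    rcases Nat.lt_or_ge i (j+1) with h' | h'
    · exact (ih (Nat.lt_succ_iff.mp h')).trans (W_prefix_succ k j)
    · have : i = j+1 := le_antisymm h h'
      simp [this]

lemma W_length_gt (k j : ℕ) : j < (W k j).length := by
  induction j with
  | zero => simp [W]
  | succ j ih =>
    rw [show W k (j+1) = W k j ++ (W k j ++ blk k (j+1)) from rfl]
    simp only [List.length_append]
    omega

lemma getD_prefix {l₁ l₂ : List ℤ} (h : l₁ <+: l₂) {i : ℕ} (hi : i < l₁.length) :
    l₂.getD i 0 = l₁.getD i 0 := by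
  obtain ⟨t, rfl⟩ := h
  rw [List.getD_eq_getElem _ _ hi, List.getD_eq_getElem, List.getElem_append_left hi]
  exact lt_of_lt_of_le hi (by simp)

lemma ee_eq (k : ℕ) {j m : ℕ} (hm : m < (W k j).length) : ee k m = (W k j).getD m 0 := by
  rcases le_total j (m+1) with h | h
  · exact getD_prefix (W_prefix k h) hm
  · have hm' : m < (W k (m+1)).length := lt_of_le_of_lt (Nat.le_succ m) (W_length_gt k (m+1))
    exact (getD_prefix (W_prefix k h) hm').symm

-- membership bounds
lemma blk_mem (k n : ℕ) {x : ℤ} (hx : x ∈ blk k n) : 0 ≤ x ∧ x ≤ k := by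
  simp only [blk, List.mem_map, List.mem_range] at hx
  obtain ⟨i, hi, rfl⟩ := hx
  have hdiv : i / (2*n+1) < k + 1 := Nat.div_lt_of_lt_mul (by rwa [Nat.mul_comm] at hi)
  split
  · refine ⟨by positivity, ?_⟩
    exact_mod_cast Nat.lt_succ_iff.mp hdiv
  · exact ⟨le_refl 0, by positivity⟩

lemma W_mem (k j : ℕ) {x : ℤ} (hx : x ∈ W k j) : 0 ≤ x ∧ x ≤ k := by
  induction j with
  | zero =>
    simp only [W, List.mem_singleton] at hx
    rw [hx]
    exact ⟨le_refl 0, by positivity⟩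
  | succ j ih =>
    rw [show W k (j+1) = W k j ++ (W k j ++ blk k (j+1)) from rfl] at hx
    simp only [List.mem_append] at hx
    rcases hx with h | h | h
    · exact ih h
    · exact ih h
    · exact blk_mem k (j+1) h

lemma ee_bounds (k m : ℕ) : 0 ≤ ee k m ∧ ee k m ≤ k := by
  have hm : m < (W k (m+1)).length := lt_of_le_of_lt (Nat.le_succ m) (W_length_gt k (m+1))
  have : ee k m ∈ W k (m+1) := by
    rw [ee, List.getD_eq_getElem _ _ hm]
    exact List.getElem_mem _
  exact W_mem k (m+1) this

lemma om_mem (k m : ℕ) : om k m ∈ Finset.Icc (0:ℤ) (2*k) := by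
  have h1 := ee_bounds k m
  have h2 := ee_bounds k (m+1)
  simp only [Finset.mem_Icc, om]
  constructor <;> linarith [h1.1, h1.2, h2.1, h2.2]

-- occurrence of prefixes at unbounded positions
lemma ee_shift (k : ℕ) {j J : ℕ} (hjJ : j ≤ J) {i : ℕ} (hi : i < (W k j).length) :
    ee k ((W k J).length + i) = ee k i := by
  have hiJ : i < (W k J).length := lt_of_lt_of_le hi (W_prefix k hjJ).length_le
  have hlen : (W k J).length + i < (W k (J+1)).length := by
    rw [show W k (J+1) = W k J ++ (W k J ++ blk k (J+1)) from rfl]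
    simp only [List.length_append]
    omega
  rw [ee_eq k hlen, ee_eq k hiJ]
  rw [show W k (J+1) = W k J ++ (W k J ++ blk k (J+1)) from rfl]
  rw [List.getD_append_right _ _ _ _ (Nat.le_add_right _ _), Nat.add_sub_cancel_left,
      List.getD_append _ _ _ _ hiJ]

-- telescoping sums
lemma window_sum (k m n : ℕ) :
    ((List.range n).map (fun i => om k (m + i))).sum = (k:ℤ)*n + (ee k (m+n) - ee k m) := by
  have h : ∀ N : ℕ, ((List.range N).map (fun i => om k (m + i))).sum
      = (k:ℤ)*N + (ee k (m+N) - ee k m) := by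
    intro N
    induction N with
    | zero => simp
    | succ N ih =>
      rw [List.range_succ, List.map_append, List.sum_append, ih]
      simp only [List.map_cons, List.map_nil, List.sum_cons, List.sum_nil, om]
      rw [show m + (N+1) = m + N + 1 from rfl]
      push_cast
      ring
  exact h n

-- gadget positions: for n ≥ 1, blk k n occurs in ee at position 2*(W k (n-1)).length
lemma ee_blk (k j i : ℕ) (hi : i < (blk k (j+1)).length) :
    ee k (2 * (W k j).length + i) = (blk k (j+1)).getD i 0 := by
  have hlen : 2 * (W k j).length + i < (W k (j+1)).length := by
    rw [show W k (j+1) = W k j ++ (W k j ++ blk k (j+1)) from rfl]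
    simp only [List.length_append]
    omega
  rw [ee_eq k hlen]
  rw [show W k (j+1) = W k j ++ (W k j ++ blk k (j+1)) from rfl]
  rw [List.getD_append_right _ _ _ _ (by omega),
      List.getD_append_right _ _ _ _ (by omega)]
  congr 1
  omega

lemma blk_getD (k n i : ℕ) (hi : i < (k+1)*(2*n+1)) :
    (blk k n).getD i 0 = if i % (2*n+1) = n then ((i / (2*n+1) : ℕ) : ℤ) else 0 := by
  rw [blk, List.getD_eq_getElem _ _ (by simpa using hi)]
  simp

lemma gadget (k j v : ℕ) (hv : v ≤ k) :
    ee k (2 * (W k j).length + (2*(j+1)+1)*v) = 0 ∧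
    ee k (2 * (W k j).length + ((j+1) + (2*(j+1)+1)*v)) = v ∧
    ee k (2 * (W k j).length + (2*(j+1) + (2*(j+1)+1)*v)) = 0 := by
  set n := j + 1 with hn
  have hb : ∀ i, i < (k+1)*(2*n+1) → ee k (2 * (W k j).length + i) = (blk k n).getD i 0 := by
    intro i hi
    exact ee_blk k j i (by simpa [blk_length] using hi)
  have hbound : ∀ a, a ≤ 2*n → a + (2*n+1)*v < (k+1)*(2*n+1) := by
    intro a ha
    have h1 : (2*n+1)*v ≤ (2*n+1)*k := Nat.mul_le_mul_left _ hv
    nlinarith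
  refine ⟨?_, ?_, ?_⟩
  · rw [show (2*n+1)*v = 0 + (2*n+1)*v from (Nat.zero_add _).symm]
    rw [hb _ (hbound 0 (by omega)), blk_getD _ _ _ (hbound 0 (by omega))]
    rw [Nat.add_mul_mod_self_left]
    simp [hn]
  · rw [hb _ (hbound n (by omega)), blk_getD _ _ _ (hbound n (by omega))]
    rw [Nat.add_mul_mod_self_left, Nat.mod_eq_of_lt (by omega), if_pos rfl,
        Nat.add_mul_div_left _ _ (by omega : 0 < 2*n+1), Nat.div_eq_of_lt (by omega)]
    simp
  · rw [hb _ (hbound (2*n) le_rfl), blk_getD _ _ _ (hbound (2*n) le_rfl)]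
    rw [Nat.add_mul_mod_self_left, Nat.mod_eq_of_lt (by omega)]
    rw [if_neg (by omega)]

/-- For every k ≥ 1 there is a recurrent word over {0, 1, …, 2k} with constant
additive complexity 2k + 1. -/
theorem stmt17 (k : ℕ) (hk : 1 ≤ k) :
    ∃ ω : ℕ → ℤ, (∀ i : ℕ, ω i ∈ Finset.Icc (0 : ℤ) (2 * (k : ℤ))) ∧ Recurrent ω ∧
      ∀ n : ℕ, 1 ≤ n →
        Set.ncard {s : ℤ | ∃ B : List ℤ, Factor ω B ∧ B.length = n ∧ B.sum = s}
          = 2 * k + 1 := by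
  refine ⟨om k, fun i => by simpa using om_mem k i, ?_, ?_⟩
  · -- Recurrent
    rintro B ⟨m, hB⟩ m₀
    set n := B.length with hn
    set J := max (m + n + 1) m₀ with hJ
    set p := (W k J).length with hp
    have hshift : ∀ r, r ≤ m + n → ee k (p + r) = ee k r := by
      intro r hr
      exact ee_shift k (le_max_left _ _) (by have := W_length_gt k (m+n+1); omega)
    refine ⟨p + m, ?_, ?_⟩
    · have := W_length_gt k J
      have := le_max_right (m + n + 1) m₀
      omega
    · rw [hB]
      apply List.map_congr_left
      intro i hi
      simp only [List.mem_range] at hi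
      have h1 : ee k (p + m + i) = ee k (m + i) := by
        rw [show p + m + i = p + (m + i) from by omega]
        exact hshift _ (by omega)
      have h2 : ee k (p + m + i + 1) = ee k (m + i + 1) := by
        rw [show p + m + i + 1 = p + (m + i + 1) from by omega]
        exact hshift _ (by omega)
      simp only [om, h1, h2]
  · -- complexity
    intro n hn
    have hset : {s : ℤ | ∃ B : List ℤ, Factor (om k) B ∧ B.length = n ∧ B.sum = s}
        = ↑(Finset.Icc ((k:ℤ)*n - k) ((k:ℤ)*n + k)) := by
      ext s
      simp only [Set.mem_setOf_eq, Finset.coe_Icc, Set.mem_Icc]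
      constructor
      · rintro ⟨B, ⟨m, hB⟩, hlen, rfl⟩
        rw [hB, hlen, window_sum]
        have h1 := ee_bounds k (m + n)
        have h2 := ee_bounds k m
        constructor <;> linarith [h1.1, h1.2, h2.1, h2.2]
      · rintro ⟨hlo, hhi⟩
        obtain ⟨j, rfl⟩ : ∃ j, n = j + 1 := ⟨n - 1, by omega⟩
        set n := j + 1
        rcases le_total ((k:ℤ)*n) s with hge | hle
        · -- s = k*n + v with 0 ≤ v ≤ k
          set v : ℕ := (s - (k:ℤ)*n).toNat with hv
          have hvk : v ≤ k := by omega
          have hsv : (v : ℤ) = s - (k:ℤ)*n := by omega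
          obtain ⟨g0, gv, -⟩ := gadget k j v hvk
          set m := 2 * (W k j).length + (2*n+1)*v with hm
          refine ⟨(List.range n).map (fun i => om k (m + i)), ⟨m, by simp⟩, by simp, ?_⟩
          rw [window_sum]
          rw [show m + n = 2 * (W k j).length + (n + (2*n+1)*v) from by omega]
          rw [gv, g0]
          omega
        · -- s = k*n - v
          set v : ℕ := ((k:ℤ)*n - s).toNat with hv
          have hvk : v ≤ k := by omega
          have hsv : (v : ℤ) = (k:ℤ)*n - s := by omega
          obtain ⟨-, gv, g2⟩ := gadget k j v hvk
          set m := 2 * (W k j).length + (n + (2*n+1)*v) with hm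
          refine ⟨(List.range n).map (fun i => om k (m + i)), ⟨m, by simp⟩, by simp, ?_⟩
          rw [window_sum]
          rw [show m + n = 2 * (W k j).length + (2*n + (2*n+1)*v) from by omega]
          rw [gv, g2]
          omega
    rw [hset, Set.ncard_coe_finset, Int.card_Icc]
    have : (k:ℤ)*n + k + 1 - ((k:ℤ)*n - k) = 2*k + 1 := by ring
    rw [this]
    omega
end

section
/- Let ω be an infinite word over a finite set S of integers, let t ≥ 1, and let μ be induced by a function f : ℤ → ℤᵗ extended additively to finite words. If ω has bounded μ-complexity, then for every k ≥ 1 some factor of ω is a k-power modulo μ, i.e., a concatenation B₁B₂⋯B_k of nonempty finite words with |B₁| = |B₂| = ⋯ = |B_k| and μ(B₁) = μ(B₂) = ⋯ = μ(B_k). -/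
/-- The value of the morphism induced by `f : ℤ → ℤᵗ` on a finite word. -/
def muSum (t : ℕ) (f : ℤ → (Fin t → ℤ)) (B : List ℤ) : Fin t → ℤ := (B.map f).sum

/-- ω has bounded μ-complexity for the morphism induced by f. -/
def BoundedMuComplexity (t : ℕ) (f : ℤ → (Fin t → ℤ)) (ω : ℕ → ℤ) : Prop :=
  ∃ M : ℕ, ∀ n : ℕ, 1 ≤ n →
    ∃ T : Finset (Fin t → ℤ), T.card ≤ M ∧
      ∀ B : List ℤ, Factor ω B → B.length = n → muSum t f B ∈ T

-- walk lemma
lemma walk_le (s : ℤ) (hs : 0 ≤ s) :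
    ∀ (N : ℕ) (g : ℕ → ℤ) (T : Finset ℤ), T.card ≤ N → (∀ j, g (j+1) - g j ≤ s) →
    ∀ m n, (∀ j, m ≤ j → j ≤ m + n → g j ∈ T) → g (m+n) - g m ≤ s * N := by
  intro N
  induction N using Nat.strong_induction_on with
  | _ N ih =>
    intro g T hcard hstep m n hmem
    have hTne : g m ∈ T := hmem m le_rfl (Nat.le_add_right _ _)
    have hN1 : 1 ≤ N := le_trans (Finset.card_pos.mpr ⟨_, hTne⟩) hcard
    by_cases hcase : g (m+n) - g m ≤ s
    · calc g (m+n) - g m ≤ s * 1 := by linarith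
        _ ≤ s * N := by
          apply mul_le_mul_of_nonneg_left _ hs
          exact_mod_cast hN1
    · push_neg at hcase
      have hgt : g m < g (m + n) := by linarith
      have hn0 : n ≠ 0 := by rintro rfl; simp at hgt
      set P : ℕ → Prop := fun i => g (m + i) ≤ g m with hP
      have hP0 : P 0 := by simp [hP]
      classical
      set j := Nat.findGreatest P n with hj
      have hjle : j ≤ n := Nat.findGreatest_le n
      have hPj : P j := Nat.findGreatest_spec (Nat.zero_le n) hP0
      have hjlt : j < n := by
        rcases lt_or_eq_of_le hjle with h | h
        · exact h
        · exfalso; rw [h] at hPj; exact absurd hPj (by simp [hP]; linarith)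
      set T' := T.filter (fun v => g m < v) with hT'
      have hsub : T' ⊂ T := by
        constructor
        · exact Finset.filter_subset _ _
        · intro h
          have := h hTne
          rw [hT', Finset.mem_filter] at this
          exact lt_irrefl _ this.2
      have hcard' : T'.card < N := lt_of_lt_of_le (Finset.card_lt_card hsub) hcard
      have hmem' : ∀ l, (m + j + 1) ≤ l → l ≤ (m + j + 1) + (n - j - 1) → g l ∈ T' := by
        intro l h1 h2
        have hlmn : l ≤ m + n := by omega
        have hgl : g l ∈ T := hmem l (by omega) hlmn
        rw [hT', Finset.mem_filter]
        refine ⟨hgl, ?_⟩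
        have hgr : ¬ P (l - m) :=
          Nat.findGreatest_is_greatest (n := n) (by rw [← hj]; omega) (by omega)
        simp only [hP] at hgr
        push_neg at hgr
        rwa [show m + (l - m) = l by omega] at hgr
      have hrec := ih T'.card hcard' g T' le_rfl hstep (m + j + 1) (n - j - 1) hmem'
      rw [show (m + j + 1) + (n - j - 1) = m + n by omega] at hrec
      have hstep1 : g (m + j + 1) - g (m + j) ≤ s := hstep (m + j)
      have hPj' : g (m + j) ≤ g m := hPj
      have hcN : (T'.card : ℤ) + 1 ≤ (N : ℤ) := by exact_mod_cast hcard'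
      nlinarith [mul_le_mul_of_nonneg_left hcN hs]

lemma walk_abs (s : ℤ) (hs : 0 ≤ s) (N : ℕ) (g : ℕ → ℤ) (T : Finset ℤ) (hcard : T.card ≤ N)
    (hstep : ∀ j, |g (j+1) - g j| ≤ s) (hmem : ∀ j, g j ∈ T) :
    ∀ m m', |g m - g m'| ≤ s * N := by
  have key : ∀ m n, g (m + n) - g m ≤ s * N := fun m n =>
    walk_le s hs N g T hcard (fun j => (abs_le.mp (hstep j)).2) m n (fun j _ _ => hmem j)
  have key2 : ∀ m n, g m - g (m + n) ≤ s * N := by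
    intro m n
    have := walk_le s hs N (fun j => - g j) (T.image (fun x => -x))
      (le_trans Finset.card_image_le hcard)
      (fun j => by have := (abs_le.mp (hstep j)).1; simp; linarith)
      m n (fun j _ _ => Finset.mem_image_of_mem _ (hmem j))
    linarith
  intro m m'
  rcases le_total m m' with h | h
  · obtain ⟨n, rfl⟩ := Nat.exists_eq_add_of_le h
    rw [abs_sub_comm]
    exact abs_le.mpr ⟨by linarith [key2 m n], key m n⟩
  · obtain ⟨n, rfl⟩ := Nat.exists_eq_add_of_le h
    exact abs_le.mpr ⟨by linarith [key2 m' n], key m' n⟩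

def seg (ω : ℕ → ℤ) (b n : ℕ) : List ℤ := (List.range n).map (fun i => ω (b + i))

lemma seg_length (ω : ℕ → ℤ) (b n : ℕ) : (seg ω b n).length = n := by simp [seg]

lemma seg_factor (ω : ℕ → ℤ) (b n : ℕ) : Factor ω (seg ω b n) :=
  ⟨b, by simp [seg]⟩

lemma seg_add (ω : ℕ → ℤ) (b m n : ℕ) :
    seg ω b (m + n) = seg ω b m ++ seg ω (b + m) n := by
  simp only [seg, List.range_add, List.map_append, List.map_map]
  congr 1
  apply List.map_congr_left
  intro i _
  simp [Function.comp]
  congr 1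
  omega

lemma muSum_append (t : ℕ) (f : ℤ → (Fin t → ℤ)) (B B' : List ℤ) :
    muSum t f (B ++ B') = muSum t f B + muSum t f B' := by
  simp [muSum]

lemma muSum_single (t : ℕ) (f : ℤ → (Fin t → ℤ)) (ω : ℕ → ℤ) (x : ℕ) :
    muSum t f (seg ω x 1) = f (ω x) := by
  simp [muSum, seg, List.range_succ]

lemma seg_flatten (ω : ℕ → ℤ) (a b k : ℕ) :
    ((List.range k).map (fun j => seg ω (b + j * a) a)).flatten = seg ω b (k * a) := by
  induction k with
  | zero => simp [seg]
  | succ k ihk =>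
    rw [List.range_succ, List.map_append, List.flatten_append, ihk, Nat.succ_mul,
      seg_add]
    simp

/-- If ω has bounded μ-complexity, then for every k ≥ 1 some factor of ω is a k-power
modulo μ: a concatenation of k nonempty blocks with equal lengths and equal μ-values. -/
theorem stmt19 (S : Finset ℤ) (ω : ℕ → ℤ) (hω : ∀ i : ℕ, ω i ∈ S)
    (t : ℕ) (ht : 1 ≤ t) (f : ℤ → (Fin t → ℤ))
    (hb : BoundedMuComplexity t f ω) :
    ∀ k : ℕ, 1 ≤ k → ∃ W : List ℤ, Factor ω W ∧
      ∃ L : List (List ℤ), L.length = k ∧ W = L.flatten ∧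
        ∃ l : ℕ, 1 ≤ l ∧ ∃ v : Fin t → ℤ,
          ∀ Bi ∈ L, Bi.length = l ∧ muSum t f Bi = v := by
  classical
  intro k hk
  obtain ⟨M, hM⟩ := hb
  set B : ℕ := S.sup (fun z => Finset.univ.sup fun c : Fin t => (f z c).natAbs) with hBdef
  have hB : ∀ (i : ℕ) (c : Fin t), |f (ω i) c| ≤ (B : ℤ) := by
    intro i c
    have h1 : (f (ω i) c).natAbs ≤ Finset.univ.sup (fun c : Fin t => (f (ω i) c).natAbs) :=
      Finset.le_sup (f := fun c : Fin t => (f (ω i) c).natAbs) (Finset.mem_univ c)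
    have h2 : Finset.univ.sup (fun c : Fin t => (f (ω i) c).natAbs) ≤ B :=
      Finset.le_sup (f := fun z => Finset.univ.sup fun c : Fin t => (f z c).natAbs) (hω i)
    rw [Int.abs_eq_natAbs]
    exact_mod_cast h1.trans h2
  set p : ℕ := 2 * B * M + 1 with hpdef
  haveI : NeZero p := ⟨Nat.succ_ne_zero _⟩
  set χ : ℕ → (Fin t → ZMod p) :=
    fun m c => ((muSum t f (seg ω 0 m) c : ℤ) : ZMod p) with hχ
  obtain ⟨a, ha, b, c0, hmono⟩ :=
    Combinatorics.exists_mono_homothetic_copy (Finset.range (k + 1)) χ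
  -- window sums of length a are within 2*B*M of each other, per coordinate
  have hwin : ∀ (c : Fin t) (m m' : ℕ),
      |muSum t f (seg ω m a) c - muSum t f (seg ω m' a) c| ≤ 2 * (B:ℤ) * M := by
    intro c
    obtain ⟨T, hTcard, hTmem⟩ := hM a ha
    exact walk_abs (2 * (B:ℤ)) (by positivity) M (fun m => muSum t f (seg ω m a) c)
      (T.image (fun v => v c)) (le_trans Finset.card_image_le hTcard)
      (fun m => by
        have e1 : muSum t f (seg ω m (a + 1)) =
            muSum t f (seg ω m a) + muSum t f (seg ω (m + a) 1) := by
          rw [← muSum_append, ← seg_add]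
        have e2 : muSum t f (seg ω m (a + 1)) =
            muSum t f (seg ω m 1) + muSum t f (seg ω (m + 1) a) := by
          rw [← muSum_append, ← seg_add, Nat.add_comm 1 a]
        have e3 := congrFun (e1.symm.trans e2) c
        simp only [Pi.add_apply, muSum_single] at e3
        have hb1 := hB (m + a) c
        have hb2 := hB m c
        have e4 : muSum t f (seg ω (m+1) a) c - muSum t f (seg ω m a) c
            = f (ω (m + a)) c - f (ω m) c := by linarith
        rw [e4]
        calc |f (ω (m + a)) c - f (ω m) c| ≤ |f (ω (m + a)) c| + |f (ω m) c| := abs_sub _ _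
          _ ≤ (B:ℤ) + B := add_le_add hb1 hb2
          _ = 2 * B := by ring)
      (fun m => Finset.mem_image_of_mem _ (hTmem _ (seg_factor ω m a) (seg_length ω m a)))
  -- each block's μ-value is ≡ 0 mod p coordinatewise
  have hdvd : ∀ j, j < k → ∀ c : Fin t, ((p:ℤ)) ∣ muSum t f (seg ω (b + j * a) a) c := by
    intro j hj c
    rw [show b + j * a = a * j + b by ring]
    have hidx : a * j + b + a = a * (j + 1) + b := by ring
    have key : muSum t f (seg ω 0 (a * (j+1) + b)) c
        = muSum t f (seg ω 0 (a * j + b)) c + muSum t f (seg ω (a * j + b) a) c := by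
      have h := seg_add ω 0 (a * j + b) a
      rw [Nat.zero_add, hidx] at h
      rw [h, muSum_append]
      simp
    have z1 := congrFun (hmono j (Finset.mem_range.mpr (by omega))) c
    have z2 := congrFun (hmono (j+1) (Finset.mem_range.mpr (by omega))) c
    simp only [hχ, smul_eq_mul] at z1 z2
    have e' : (muSum t f (seg ω (a * j + b) a) c : ℤ)
        = muSum t f (seg ω 0 (a * (j+1) + b)) c - muSum t f (seg ω 0 (a * j + b)) c := by
      linarith [key]
    have hz : ((muSum t f (seg ω (a * j + b) a) c : ℤ) : ZMod p) = 0 := by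
      rw [e']
      push_cast
      rw [z1, z2]
      ring
    exact (ZMod.intCast_zmod_eq_zero_iff_dvd _ p).mp hz
  -- all blocks have the same μ-value
  have hblocks : ∀ j, j < k → muSum t f (seg ω (b + j * a) a) = muSum t f (seg ω b a) := by
    intro j hj
    funext c
    have d0 := hdvd 0 (by omega) c
    have dj := hdvd j hj c
    rw [show b + 0 * a = b by ring] at d0
    have hd : (p:ℤ) ∣ (muSum t f (seg ω (b + j * a) a) c - muSum t f (seg ω b a) c) :=
      dvd_sub dj d0
    have hsm : |muSum t f (seg ω (b + j * a) a) c - muSum t f (seg ω b a) c| < (p:ℤ) := by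
      have := hwin c (b + j * a) b
      have hp : (2 * (B:ℤ) * M) < (p:ℤ) := by
        rw [hpdef]; push_cast; linarith
      linarith
    have := Int.eq_zero_of_abs_lt_dvd hd hsm
    linarith
  refine ⟨seg ω b (k * a), seg_factor ω b (k * a),
    (List.range k).map (fun j => seg ω (b + j * a) a), by simp,
    (seg_flatten ω a b k).symm, a, ha, muSum t f (seg ω b a), ?_⟩
  intro Bi hBi
  simp only [List.mem_map, List.mem_range] at hBi
  obtain ⟨j, hj, rfl⟩ := hBi
  exact ⟨seg_length ω (b + j * a) a, hblocks j hj⟩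
end
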